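/- arXiv:1008.0734 — 12 statements merged into one kernel-verified Lean document; each statement's English description precedes it below -/
import Mathlib

section
/- Let A be an n×n real symmetric positive definite matrix. If the condition number κ(A) is at most √(5+2√6), then the Kantorovich function K(x) = (xᵀAx)(xᵀA⁻¹x) is convex on ℝⁿ. -/
open Matrix

/-- Core algebraic inequality (case of nonnegative correlation). -/
lemma kant_core {n : ℕ} (lo hi : ℝ) (d s t : Fin n → ℝ) (hlo : 0 < lo)
    (hd : ∀ i, lo ≤ d i ∧ d i ≤ hi) (hih : hi ≤ 17 * lo)
    (hρ : 0 ≤ ∑ i, s i * t i) :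
    0 ≤ (∑ i, (t i)^2) * (∑ i, d i * (s i)^2) + (∑ i, (s i)^2) * (∑ i, d i * (t i)^2)
      + 4 * (∑ i, s i * t i) * (∑ i, d i * (s i * t i)) := by
  have hS0 : (0:ℝ) ≤ ∑ i, (s i)^2 := Finset.sum_nonneg fun i _ => sq_nonneg _
  have hT0 : (0:ℝ) ≤ ∑ i, (t i)^2 := Finset.sum_nonneg fun i _ => sq_nonneg _
  obtain ⟨σ, hσ0, hσ2⟩ : ∃ x : ℝ, 0 ≤ x ∧ x^2 = ∑ i, (s i)^2 :=
    ⟨Real.sqrt _, Real.sqrt_nonneg _, Real.sq_sqrt hS0⟩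
  obtain ⟨τ, hτ0, hτ2⟩ : ∃ x : ℝ, 0 ≤ x ∧ x^2 = ∑ i, (t i)^2 :=
    ⟨Real.sqrt _, Real.sqrt_nonneg _, Real.sq_sqrt hT0⟩
  set ρ := ∑ i, s i * t i with hρdef
  have hCS2 : ρ^2 ≤ σ^2 * τ^2 := by
    rw [hσ2, hτ2]; exact Finset.sum_mul_sq_le_sq_mul_sq _ _ _
  have hCS : ρ ≤ σ * τ := by nlinarith [mul_nonneg hσ0 hτ0]
  have expand : (∑ i, (t i)^2) * (∑ i, d i * (s i)^2) + (∑ i, (s i)^2) * (∑ i, d i * (t i)^2)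
      + 4 * ρ * (∑ i, d i * (s i * t i))
      = ∑ i, d i * (τ^2 * (s i)^2 + σ^2 * (t i)^2 + 4 * ρ * (s i * t i)) := by
    rw [← hσ2, ← hτ2, Finset.mul_sum, Finset.mul_sum, Finset.mul_sum,
      ← Finset.sum_add_distrib, ← Finset.sum_add_distrib]
    exact Finset.sum_congr rfl fun i _ => by ring
  rw [expand]
  rcases le_or_gt (2 * ρ) (σ * τ) with hc | hc
  · refine Finset.sum_nonneg fun i _ => mul_nonneg (le_trans hlo.le (hd i).1) ?_
    rcases le_or_gt 0 (s i * t i) with h | h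
    · nlinarith [mul_nonneg hρ h, mul_nonneg (sq_nonneg τ) (sq_nonneg (s i)),
        mul_nonneg (sq_nonneg σ) (sq_nonneg (t i))]
    · nlinarith [sq_nonneg (τ * s i + σ * t i),
        mul_nonneg (by linarith : (0:ℝ) ≤ σ * τ - 2 * ρ) (by linarith : (0:ℝ) ≤ -(s i * t i))]
  · have hP : 0 < σ * τ := by linarith
    have per : ∀ i ∈ Finset.univ, lo * ((σ * τ + 2 * ρ) * (τ * s i + σ * t i)^2)
        + hi * ((σ * τ - 2 * ρ) * (τ * s i - σ * t i)^2)
        ≤ (2 * (σ * τ)) * (d i * (τ^2 * (s i)^2 + σ^2 * (t i)^2 + 4 * ρ * (s i * t i))) := by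
      intro i _
      obtain ⟨h1, h2⟩ := hd i
      have t1 : 0 ≤ (d i - lo) * ((σ * τ + 2 * ρ) * (τ * s i + σ * t i)^2) :=
        mul_nonneg (by linarith) (mul_nonneg (by linarith) (sq_nonneg _))
      have t2 : 0 ≤ (hi - d i) * ((2 * ρ - σ * τ) * (τ * s i - σ * t i)^2) :=
        mul_nonneg (by linarith) (mul_nonneg (by linarith) (sq_nonneg _))
      nlinarith [t1, t2]
    have hsum := Finset.sum_le_sum per
    rw [Finset.sum_add_distrib, ← Finset.mul_sum, ← Finset.mul_sum, ← Finset.mul_sum,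
      ← Finset.mul_sum, ← Finset.mul_sum] at hsum
    have e1 : ∑ i, (τ * s i + σ * t i)^2 = 2 * (σ * τ) * (σ * τ + ρ) := by
      rw [Finset.sum_congr rfl (fun i _ => show (τ * s i + σ * t i)^2
          = τ^2 * (s i)^2 + σ^2 * (t i)^2 + (2 * (σ * τ)) * (s i * t i) from by ring),
        Finset.sum_add_distrib, Finset.sum_add_distrib, ← Finset.mul_sum, ← Finset.mul_sum,
        ← Finset.mul_sum, ← hσ2, ← hτ2, ← hρdef]
      ring
    have e2 : ∑ i, (τ * s i - σ * t i)^2 = 2 * (σ * τ) * (σ * τ - ρ) := by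
      rw [Finset.sum_congr rfl (fun i _ => show (τ * s i - σ * t i)^2
          = τ^2 * (s i)^2 + σ^2 * (t i)^2 + (-(2 * (σ * τ))) * (s i * t i) from by ring),
        Finset.sum_add_distrib, Finset.sum_add_distrib, ← Finset.mul_sum, ← Finset.mul_sum,
        ← Finset.mul_sum, ← hσ2, ← hτ2, ← hρdef]
      ring
    rw [e1, e2] at hsum
    have hG : 0 ≤ lo * ((σ * τ + 2 * ρ) * (σ * τ + ρ)) + hi * ((σ * τ - 2 * ρ) * (σ * τ - ρ)) := by
      have h1 : 0 ≤ (17 * lo - hi) * ((2 * ρ - σ * τ) * (σ * τ - ρ)) :=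
        mul_nonneg (by linarith) (mul_nonneg (by linarith) (by linarith))
      linarith [h1, mul_nonneg hlo.le (sq_nonneg (4 * ρ - 3 * (σ * τ))), mul_nonneg hlo.le (sq_nonneg ρ)]
    nlinarith [hsum, hG, hP]

/-- Core inequality without the sign assumption on the correlation. -/
lemma kant_core' {n : ℕ} (lo hi : ℝ) (d s t : Fin n → ℝ) (hlo : 0 < lo)
    (hd : ∀ i, lo ≤ d i ∧ d i ≤ hi) (hih : hi ≤ 17 * lo) :
    0 ≤ (∑ i, (t i)^2) * (∑ i, d i * (s i)^2) + (∑ i, (s i)^2) * (∑ i, d i * (t i)^2)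
      + 4 * (∑ i, s i * t i) * (∑ i, d i * (s i * t i)) := by
  rcases le_or_gt 0 (∑ i, s i * t i) with h | h
  · exact kant_core lo hi d s t hlo hd hih h
  · have h2 : 0 ≤ ∑ i, s i * (-t i) := by
      have : ∑ i, s i * (-t i) = -∑ i, s i * t i := by
        rw [← Finset.sum_neg_distrib]; exact Finset.sum_congr rfl fun i _ => by ring
      rw [this]; linarith
    have key := kant_core lo hi d s (fun i => -t i) hlo hd hih h2
    have r1 : ∑ i, (-t i)^2 = ∑ i, (t i)^2 := Finset.sum_congr rfl fun i _ => by ring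
    have r2 : ∑ i, d i * (-t i)^2 = ∑ i, d i * (t i)^2 := Finset.sum_congr rfl fun i _ => by ring
    have r3 : ∑ i, s i * (-t i) = -∑ i, s i * t i := by
      rw [← Finset.sum_neg_distrib]; exact Finset.sum_congr rfl fun i _ => by ring
    have r4 : ∑ i, d i * (s i * (-t i)) = -∑ i, d i * (s i * t i) := by
      rw [← Finset.sum_neg_distrib]; exact Finset.sum_congr rfl fun i _ => by ring
    rw [r1, r2, r3, r4] at key
    nlinarith [key]

set_option maxHeartbeats 1000000 in
/-- The key pointwise second-order inequality. -/
lemma kant_key {n : ℕ} (hn : 0 < n) (A : Matrix (Fin n) (Fin n) ℝ) (hA : A.PosDef)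
    (hκ : (⨆ i, hA.1.eigenvalues i) / (⨅ i, hA.1.eigenvalues i)
            ≤ Real.sqrt (5 + 2 * Real.sqrt 6)) (x v : Fin n → ℝ) :
    0 ≤ (v ⬝ᵥ A *ᵥ v) * (x ⬝ᵥ A⁻¹ *ᵥ x) + (x ⬝ᵥ A *ᵥ x) * (v ⬝ᵥ A⁻¹ *ᵥ v)
      + 4 * ((x ⬝ᵥ A *ᵥ v) * (x ⬝ᵥ A⁻¹ *ᵥ v)) := by
  haveI : Nonempty (Fin n) := ⟨⟨0, hn⟩⟩
  set lam := hA.1.eigenvalues with hlam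
  have hpos : ∀ i, 0 < lam i := fun i => hA.eigenvalues_pos i
  set V : Matrix (Fin n) (Fin n) ℝ := (hA.1.eigenvectorUnitary : Matrix (Fin n) (Fin n) ℝ)
    with hV
  have hspec : A = V * diagonal lam * star V := hA.1.spectral_theorem
  have hUV : star V * V = 1 := Unitary.coe_star_mul_self _
  have hVU : V * star V = 1 := Unitary.coe_mul_star_self _
  have hDD : diagonal lam * diagonal (fun i => (lam i)⁻¹) = 1 := by
    rw [Matrix.diagonal_mul_diagonal,
      show (fun i => lam i * (lam i)⁻¹) = fun _ => (1:ℝ) from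
        funext fun i => mul_inv_cancel₀ (hpos i).ne', Matrix.diagonal_one]
  have hinv : A⁻¹ = V * diagonal (fun i => (lam i)⁻¹) * star V := by
    apply Matrix.inv_eq_right_inv
    rw [hspec]
    calc (V * diagonal lam * star V) * (V * diagonal (fun i => (lam i)⁻¹) * star V)
        = V * (diagonal lam * ((star V * V) * (diagonal (fun i => (lam i)⁻¹) * star V))) := by
          simp only [Matrix.mul_assoc]
      _ = V * (diagonal lam * (diagonal (fun i => (lam i)⁻¹) * star V)) := by
          rw [hUV, Matrix.one_mul]
      _ = V * ((diagonal lam * diagonal (fun i => (lam i)⁻¹)) * star V) := by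
          rw [Matrix.mul_assoc]
      _ = V * ((1 : Matrix (Fin n) (Fin n) ℝ) * star V) := by rw [hDD]
      _ = 1 := by rw [Matrix.one_mul, hVU]
  have quad : ∀ (c : Fin n → ℝ) (x y : Fin n → ℝ),
      x ⬝ᵥ (V * Matrix.diagonal c * star V) *ᵥ y
        = ∑ i, c i * ((star V *ᵥ x) i * ((star V *ᵥ y) i)) := by
    intro c x y
    rw [← Matrix.mulVec_mulVec, ← Matrix.mulVec_mulVec, Matrix.dotProduct_mulVec,
      show x ᵥ* V = star V *ᵥ x from by
        rw [Matrix.star_eq_conjTranspose, show Vᴴ = Vᵀ from rfl, Matrix.mulVec_transpose]]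
    simp only [dotProduct, Matrix.mulVec_diagonal]
    exact Finset.sum_congr rfl fun i _ => by ring
  have hformA : ∀ y w : Fin n → ℝ,
      y ⬝ᵥ A *ᵥ w = ∑ i, lam i * ((star V *ᵥ y) i * ((star V *ᵥ w) i)) := by
    intro y w; conv_lhs => rw [hspec]
    exact quad lam y w
  have hformI : ∀ y w : Fin n → ℝ,
      y ⬝ᵥ A⁻¹ *ᵥ w = ∑ i, (lam i)⁻¹ * ((star V *ᵥ y) i * ((star V *ᵥ w) i)) := by
    intro y w; conv_lhs => rw [hinv]
    exact quad _ y w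
  -- eigenvalue bounds
  set m := ⨅ i, lam i with hm
  set M := ⨆ i, lam i with hM
  have hm_le : ∀ i, m ≤ lam i := fun i => ciInf_le (Finite.bddBelow_range _) i
  have hle_M : ∀ i, lam i ≤ M := fun i => le_ciSup (Finite.bddAbove_range _) i
  have hm_pos : 0 < m := by
    obtain ⟨i, hi⟩ := exists_eq_ciInf_of_finite (f := lam)
    rw [hm, ← hi]; exact hpos i
  have hM_pos : 0 < M := lt_of_lt_of_le hm_pos (le_trans (hm_le ⟨0, hn⟩) (hle_M ⟨0, hn⟩))
  have hMm : M ≤ Real.sqrt (5 + 2 * Real.sqrt 6) * m := by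
    rw [div_le_iff₀ hm_pos] at hκ; exact hκ
  have h6 : Real.sqrt 6 ≤ 6 := by
    nlinarith [Real.sq_sqrt (show (0:ℝ) ≤ 6 by norm_num), Real.sqrt_nonneg 6]
  have hK2 : (Real.sqrt (5 + 2 * Real.sqrt 6))^2 = 5 + 2 * Real.sqrt 6 :=
    Real.sq_sqrt (by positivity)
  have hM2 : M * M ≤ 17 * (m * m) := by
    nlinarith [hMm, hm_pos.le, hM_pos.le, hK2, h6,
      Real.sqrt_nonneg (5 + 2 * Real.sqrt 6), Real.sqrt_nonneg 6]
  -- apply the core inequality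
  set zx := star V *ᵥ x with hzx
  set zv := star V *ᵥ v with hzv
  set s : Fin n → ℝ := fun i => Real.sqrt (lam i) * zx i with hs
  set t : Fin n → ℝ := fun i => Real.sqrt (lam i) * zv i with ht
  set d : Fin n → ℝ := fun i => (lam i * lam i)⁻¹ with hd
  have hsq : ∀ i, Real.sqrt (lam i) * Real.sqrt (lam i) = lam i :=
    fun i => Real.mul_self_sqrt (hpos i).le
  have c1 : ∑ i, (t i)^2 = ∑ i, lam i * (zv i * zv i) :=
    Finset.sum_congr rfl fun i _ => by
      simp only [ht]; rw [sq]; linear_combination (zv i * zv i) * hsq i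
  have c3 : ∑ i, (s i)^2 = ∑ i, lam i * (zx i * zx i) :=
    Finset.sum_congr rfl fun i _ => by
      simp only [hs]; rw [sq]; linear_combination (zx i * zx i) * hsq i
  have c2 : ∑ i, d i * (s i)^2 = ∑ i, (lam i)⁻¹ * (zx i * zx i) :=
    Finset.sum_congr rfl fun i _ => by
      simp only [hs, hd]; rw [sq]
      have h0 := (hpos i).ne'
      have e2 : Real.sqrt (lam i) * zx i * (Real.sqrt (lam i) * zx i)
          = lam i * (zx i * zx i) := by linear_combination (zx i * zx i) * hsq i
      rw [e2]; field_simp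
  have c4 : ∑ i, d i * (t i)^2 = ∑ i, (lam i)⁻¹ * (zv i * zv i) :=
    Finset.sum_congr rfl fun i _ => by
      simp only [ht, hd]; rw [sq]
      have h0 := (hpos i).ne'
      have e2 : Real.sqrt (lam i) * zv i * (Real.sqrt (lam i) * zv i)
          = lam i * (zv i * zv i) := by linear_combination (zv i * zv i) * hsq i
      rw [e2]; field_simp
  have c5 : ∑ i, s i * t i = ∑ i, lam i * (zx i * zv i) :=
    Finset.sum_congr rfl fun i _ => by
      simp only [hs, ht]; linear_combination (zx i * zv i) * hsq i
  have c6 : ∑ i, d i * (s i * t i) = ∑ i, (lam i)⁻¹ * (zx i * zv i) :=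
    Finset.sum_congr rfl fun i _ => by
      simp only [hs, ht, hd]
      have h0 := (hpos i).ne'
      have e2 : Real.sqrt (lam i) * zx i * (Real.sqrt (lam i) * zv i)
          = lam i * (zx i * zv i) := by linear_combination (zx i * zv i) * hsq i
      rw [e2]; field_simp
  have core := kant_core' ((M * M)⁻¹) ((m * m)⁻¹) d s t
    (by positivity)
    (fun i => ⟨by
        apply inv_anti₀ (mul_pos (hpos i) (hpos i))
        exact mul_le_mul (hle_M i) (hle_M i) (hpos i).le hM_pos.le, by
        apply inv_anti₀ (by positivity)
        exact mul_le_mul (hm_le i) (hm_le i) hm_pos.le (hpos i).le⟩)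
    (by
      have hmm0 : 0 < m * m := by positivity
      have hMM0 : 0 < M * M := by positivity
      have h17 : (1:ℝ)/(m*m) ≤ 17/(M*M) := by
        rw [div_le_div_iff₀ hmm0 hMM0]; nlinarith [hM2]
      calc (m*m)⁻¹ = 1/(m*m) := (one_div _).symm
        _ ≤ 17/(M*M) := h17
        _ = 17 * (M*M)⁻¹ := by rw [div_eq_mul_inv])
  rw [c1, c2, c3, c4, c5, c6] at core
  rw [hformA v v, hformA x x, hformA x v, hformI x x, hformI v v, hformI x v]
  linarith [core]

set_option maxHeartbeats 1000000 in
/-- If `A` is an `n × n` real symmetric positive definite matrix whose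
condition number (largest eigenvalue over smallest eigenvalue) is at most
`√(5 + 2√6)`, then the Kantorovich function `K(x) = (xᵀAx)(xᵀA⁻¹x)` is convex on `ℝⁿ`. -/
theorem kantorovich_convex_of_condNumber_le {n : ℕ} (hn : 0 < n)
    (A : Matrix (Fin n) (Fin n) ℝ) (hA : A.PosDef)
    (hκ : (⨆ i, hA.1.eigenvalues i) / (⨅ i, hA.1.eigenvalues i)
            ≤ Real.sqrt (5 + 2 * Real.sqrt 6)) :
    ConvexOn ℝ Set.univ
      (fun x : Fin n → ℝ => (x ⬝ᵥ (A *ᵥ x)) * (x ⬝ᵥ (A⁻¹ *ᵥ x))) := by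
  have key := kant_key hn A hA hκ
  have hAt : Aᵀ = A := hA.1
  have hIt : (A⁻¹)ᵀ = A⁻¹ := by rw [Matrix.transpose_nonsing_inv, hAt]
  have hsym : ∀ (B : Matrix (Fin n) (Fin n) ℝ), Bᵀ = B →
      ∀ u w : Fin n → ℝ, u ⬝ᵥ B *ᵥ w = w ⬝ᵥ B *ᵥ u := by
    intro B hB u w
    calc u ⬝ᵥ B *ᵥ w = u ᵥ* B ⬝ᵥ w := Matrix.dotProduct_mulVec u B w
      _ = (B *ᵥ u) ⬝ᵥ w := by
          rw [show u ᵥ* B = B *ᵥ u from by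
            conv_lhs => rw [← hB]
            exact Matrix.vecMul_transpose B u]
      _ = w ⬝ᵥ B *ᵥ u := dotProduct_comm _ _
  refine ⟨convex_univ, fun x _ y _ p q hp hq hpq => ?_⟩
  dsimp only
  set v : Fin n → ℝ := y - x with hv
  set p0 := x ⬝ᵥ A *ᵥ x with hp0
  set p1 := x ⬝ᵥ A *ᵥ v with hp1
  set p2 := v ⬝ᵥ A *ᵥ v with hp2
  set q0 := x ⬝ᵥ A⁻¹ *ᵥ x with hq0
  set q1 := x ⬝ᵥ A⁻¹ *ᵥ v with hq1
  set q2 := v ⬝ᵥ A⁻¹ *ᵥ v with hq2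
  have hval : ∀ r : ℝ, ((x + r • v) ⬝ᵥ A *ᵥ (x + r • v)) = p0 + 2*p1*r + p2*r^2 := by
    intro r
    simp only [Matrix.mulVec_add, Matrix.mulVec_smul, dotProduct_add,
      add_dotProduct, dotProduct_smul, smul_dotProduct, smul_eq_mul]
    rw [hsym A hAt v x]
    rw [hp0, hp1, hp2]
    ring
  have hvalI : ∀ r : ℝ, ((x + r • v) ⬝ᵥ A⁻¹ *ᵥ (x + r • v)) = q0 + 2*q1*r + q2*r^2 := by
    intro r
    simp only [Matrix.mulVec_add, Matrix.mulVec_smul, dotProduct_add,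
      add_dotProduct, dotProduct_smul, smul_dotProduct, smul_eq_mul]
    rw [hsym A⁻¹ hIt v x]
    rw [hq0, hq1, hq2]
    ring
  have hcrA : ∀ r : ℝ, ((x + r • v) ⬝ᵥ A *ᵥ v) = p1 + p2*r := by
    intro r
    simp only [add_dotProduct, smul_dotProduct, smul_eq_mul]
    rw [hp1, hp2]; ring
  have hcrI : ∀ r : ℝ, ((x + r • v) ⬝ᵥ A⁻¹ *ᵥ v) = q1 + q2*r := by
    intro r
    simp only [add_dotProduct, smul_dotProduct, smul_eq_mul]
    rw [hq1, hq2]; ring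
  set φ : ℝ → ℝ := fun r => (p0 + 2*p1*r + p2*r^2) * (q0 + 2*q1*r + q2*r^2) with hφ
  set φ1 : ℝ → ℝ := fun r =>
    (2*p1 + 2*p2*r) * (q0 + 2*q1*r + q2*r^2) + (p0 + 2*p1*r + p2*r^2) * (2*q1 + 2*q2*r)
    with hφ1
  have hder : ∀ (a b c r : ℝ), HasDerivAt (fun u : ℝ => a + b*u + c*u^2) (b + 2*c*r) r := by
    intro a b c r
    have h1 : HasDerivAt (fun u : ℝ => b*u) b r := by simpa using (hasDerivAt_id r).const_mul b
    have h2 : HasDerivAt (fun u : ℝ => c*u^2) (c*(2*r)) r := by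
      simpa using (hasDerivAt_pow 2 r).const_mul c
    have h3 := ((hasDerivAt_const r a).add h1).add h2
    exact h3.congr_deriv (by ring)
  have hlin : ∀ (b c r : ℝ), HasDerivAt (fun u : ℝ => b + c*u) c r := by
    intro b c r
    have h1 : HasDerivAt (fun u : ℝ => c*u) c r := by simpa using (hasDerivAt_id r).const_mul c
    exact ((hasDerivAt_const r b).add h1).congr_deriv (by ring)
  have hφ' : ∀ r, HasDerivAt φ (φ1 r) r := by
    intro r
    have := (hder p0 (2*p1) p2 r).mul (hder q0 (2*q1) q2 r)
    exact this
  have hφ1' : ∀ r, HasDerivAt φ1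
      ((2*p2) * (q0 + 2*q1*r + q2*r^2) + (2*p1 + 2*p2*r) * (2*q1 + 2*q2*r)
        + ((2*p1 + 2*p2*r) * (2*q1 + 2*q2*r) + (p0 + 2*p1*r + p2*r^2) * (2*q2))) r := by
    intro r
    exact ((hlin (2*p1) (2*p2) r).mul (hder q0 (2*q1) q2 r)).add
      ((hder p0 (2*p1) p2 r).mul (hlin (2*q1) (2*q2) r))
  have hderiv1 : deriv φ = φ1 := funext fun r => (hφ' r).deriv
  have hconv : ConvexOn ℝ Set.univ φ := by
    apply convexOn_of_deriv2_nonneg convex_univ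
    · exact (Differentiable.continuous fun r => (hφ' r).differentiableAt).continuousOn
    · rw [interior_univ]
      exact fun r _ => ((hφ' r).differentiableAt).differentiableWithinAt
    · rw [interior_univ, hderiv1]
      exact fun r _ => ((hφ1' r).differentiableAt).differentiableWithinAt
    · intro r _
      have h2 : deriv^[2] φ r = deriv (deriv φ) r := rfl
      rw [h2, hderiv1, (hφ1' r).deriv]
      have hk := key (x + r • v) v
      rw [hval r, hvalI r, hcrA r, hcrI r] at hk
      nlinarith [hk]
  have hxy : p • x + q • y = x + q • v := by
    funext i
    simp only [Pi.add_apply, Pi.smul_apply, Pi.sub_apply, smul_eq_mul, hv]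
    linear_combination x i * hpq
  have hy1 : x + (1:ℝ) • v = y := by
    funext i
    simp only [Pi.add_apply, Pi.smul_apply, Pi.sub_apply, smul_eq_mul, hv]
    ring
  have hx0 : x + (0:ℝ) • v = x := by
    funext i
    simp only [Pi.add_apply, Pi.smul_apply, Pi.sub_apply, smul_eq_mul, hv]
    ring
  have hcc := hconv.2 (Set.mem_univ (0:ℝ)) (Set.mem_univ (1:ℝ)) hp hq hpq
  simp only [smul_eq_mul, mul_zero, mul_one, zero_add] at hcc
  -- hcc : φ q ≤ p * φ 0 + q * φ 1
  have e0 : φ 0 = p0 * q0 := by rw [hφ]; norm_num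
  have e1 : φ 1 = (p0 + 2*p1 + p2) * (q0 + 2*q1 + q2) := by rw [hφ]; norm_num
  have eq1 : (p • x + q • y) ⬝ᵥ A *ᵥ (p • x + q • y) = p0 + 2*p1*q + p2*q^2 := by
    rw [hxy]; exact hval q
  have eq2 : (p • x + q • y) ⬝ᵥ A⁻¹ *ᵥ (p • x + q • y) = q0 + 2*q1*q + q2*q^2 := by
    rw [hxy]; exact hvalI q
  have eqy1 : y ⬝ᵥ A *ᵥ y = p0 + 2*p1 + p2 := by
    have := hval 1; rw [hy1] at this; simpa using this
  have eqy2 : y ⬝ᵥ A⁻¹ *ᵥ y = q0 + 2*q1 + q2 := by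
    have := hvalI 1; rw [hy1] at this; simpa using this
  rw [eq1, eq2, eqy1, eqy2, hp0, hq0] at *
  calc (p0 + 2*p1*q + p2*q^2) * (q0 + 2*q1*q + q2*q^2) = φ q := by rw [hφ]
    _ ≤ p * φ 0 + q * φ 1 := hcc
    _ = p * (p0 * q0) + q * ((p0 + 2*p1 + p2) * (q0 + 2*q1 + q2)) := by rw [e0, e1]
end

section
/- Let A be an n×n real symmetric positive definite matrix. If the Kantorovich function K(x) = (xᵀAx)(xᵀA⁻¹x) is convex on ℝⁿ, then the condition number κ(A) is at most 3 + 2√2. -/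
open Matrix

section Aux

variable {n : ℕ}

private lemma inv_mulVec_of_eigen {A : Matrix (Fin n) (Fin n) ℝ} (hA : A.PosDef)
    {u : Fin n → ℝ} {lam : ℝ} (hlam : 0 < lam) (h : A *ᵥ u = lam • u) :
    A⁻¹ *ᵥ u = lam⁻¹ • u := by
  have hdet : IsUnit A.det := hA.det_pos.ne'.isUnit
  have h1 : A⁻¹ *ᵥ (A *ᵥ u) = u := by
    rw [mulVec_mulVec, Matrix.nonsing_inv_mul A hdet, one_mulVec]
  rw [h, mulVec_smul] at h1
  calc A⁻¹ *ᵥ u = lam⁻¹ • (lam • (A⁻¹ *ᵥ u)) := by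
        rw [smul_smul, inv_mul_cancel₀ hlam.ne', one_smul]
    _ = lam⁻¹ • u := by rw [h1]

end Aux

/-- If `A` is an `n × n` real symmetric positive definite matrix for which the
Kantorovich function `K(x) = (xᵀAx)(xᵀA⁻¹x)` is convex on `ℝⁿ`, then the condition number
of `A` (largest eigenvalue over smallest eigenvalue) is at most `3 + 2√2`. -/
theorem condNumber_le_of_kantorovich_convex {n : ℕ} (hn : 0 < n)
    (A : Matrix (Fin n) (Fin n) ℝ) (hA : A.PosDef)
    (hconv : ConvexOn ℝ Set.univ
      (fun x : Fin n → ℝ => (x ⬝ᵥ (A *ᵥ x)) * (x ⬝ᵥ (A⁻¹ *ᵥ x)))) :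
    (⨆ i, hA.1.eigenvalues i) / (⨅ i, hA.1.eigenvalues i) ≤ 3 + 2 * Real.sqrt 2 := by
  have hne : Nonempty (Fin n) := Fin.pos_iff_nonempty.mp hn
  set ev := hA.1.eigenvalues with hev
  have hevpos : ∀ i, 0 < ev i := hA.eigenvalues_pos
  obtain ⟨i, hi⟩ := Finite.exists_max ev
  obtain ⟨j, hj⟩ := Finite.exists_min ev
  have hM : (⨆ k, ev k) = ev i :=
    le_antisymm (ciSup_le hi) (le_ciSup (Set.Finite.bddAbove (Set.finite_range ev)) i)
  have hm : (⨅ k, ev k) = ev j :=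
    le_antisymm (ciInf_le (Set.Finite.bddBelow (Set.finite_range ev)) j) (le_ciInf hj)
  rw [hM, hm]
  set M := ev i with hMdef
  set m := ev j with hmdef
  have hMpos : 0 < M := hevpos i
  have hmpos : 0 < m := hevpos j
  have hs2 : Real.sqrt 2 ^ 2 = 2 := Real.sq_sqrt (by norm_num)
  have hsnn : 0 ≤ Real.sqrt 2 := Real.sqrt_nonneg 2
  by_cases hij : i = j
  · have hMm : M = m := by rw [hMdef, hmdef, hij]
    rw [hMm, div_self hmpos.ne']
    nlinarith
  -- key: M/m + m/M ≤ 6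
  have hkey : M / m + m / M ≤ 6 := by
    set u : Fin n → ℝ := ⇑(hA.1.eigenvectorBasis i) with hu
    set v : Fin n → ℝ := ⇑(hA.1.eigenvectorBasis j) with hv
    have hon := hA.1.eigenvectorBasis.orthonormal
    rw [orthonormal_iff_ite] at hon
    have hdot : ∀ k l, (⇑(hA.1.eigenvectorBasis k) : Fin n → ℝ) ⬝ᵥ ⇑(hA.1.eigenvectorBasis l)
        = if k = l then 1 else 0 := by
      intro k l
      have := hon k l
      rw [EuclideanSpace.inner_eq_star_dotProduct] at this
      rw [dotProduct_comm]
      simpa using this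
    have huu : u ⬝ᵥ u = 1 := by simpa using hdot i i
    have hvv : v ⬝ᵥ v = 1 := by simpa using hdot j j
    have huv : u ⬝ᵥ v = 0 := by simpa [hij] using hdot i j
    have hvu : v ⬝ᵥ u = 0 := by simpa [Ne.symm hij] using hdot j i
    have hAu : A *ᵥ u = M • u := hA.1.mulVec_eigenvectorBasis i
    have hAv : A *ᵥ v = m • v := hA.1.mulVec_eigenvectorBasis j
    have hAiu : A⁻¹ *ᵥ u = M⁻¹ • u := inv_mulVec_of_eigen hA hMpos hAu
    have hAiv : A⁻¹ *ᵥ v = m⁻¹ • v := inv_mulVec_of_eigen hA hmpos hAv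
    -- value of K at p•u + q•v
    have hK : ∀ p q : ℝ,
        ((p • u + q • v) ⬝ᵥ (A *ᵥ (p • u + q • v))) *
          ((p • u + q • v) ⬝ᵥ (A⁻¹ *ᵥ (p • u + q • v)))
        = (p^2 * M + q^2 * m) * (p^2 * M⁻¹ + q^2 * m⁻¹) := by
      intro p q
      rw [mulVec_add, mulVec_smul, mulVec_smul, hAu, hAv,
          mulVec_add, mulVec_smul, mulVec_smul, hAiu, hAiv]
      simp only [add_dotProduct, smul_dotProduct, dotProduct_add, dotProduct_smul,
        smul_eq_mul, huu, hvv, huv, hvu]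
      ring
    -- convexity inequality along the segment
    have hineq : ∀ t : ℝ, (M/m + m/M) * (2*t^2 - t^4) ≤ 12*t^2 + 2*t^4 := by
      intro t
      have hc := hconv.2 (Set.mem_univ ((1+t) • u + (1-t) • v))
        (Set.mem_univ ((1-t) • u + (1+t) • v))
        (by norm_num : (0:ℝ) ≤ 1/2) (by norm_num : (0:ℝ) ≤ 1/2) (by norm_num)
      have hmid : (1/2 : ℝ) • ((1+t) • u + (1-t) • v) + (1/2 : ℝ) • ((1-t) • u + (1+t) • v)
          = (1:ℝ) • u + (1:ℝ) • v := by
        module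
      rw [hmid] at hc
      simp only [hK] at hc
      have h1 : M⁻¹ = 1/M := by ring
      have h2 : m⁻¹ = 1/m := by ring
      rw [h1, h2] at hc
      have hMne := hMpos.ne'
      have hmne := hmpos.ne'
      have expand : ((1:ℝ)^2 * M + 1^2 * m) * (1^2 * (1/M) + 1^2 * (1/m))
          = 2 + (M/m + m/M) := by field_simp; ring
      have expand2 : ∀ s : ℝ, ((1+s)^2 * M + (1-s)^2 * m) * ((1+s)^2 * (1/M) + (1-s)^2 * (1/m))
          = (1+s)^4 + (1-s)^4 + (M/m + m/M) * ((1+s)^2 * (1-s)^2) := by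
        intro s; field_simp; ring
      have expand3 : ∀ s : ℝ, ((1-s)^2 * M + (1+s)^2 * m) * ((1-s)^2 * (1/M) + (1+s)^2 * (1/m))
          = (1+s)^4 + (1-s)^4 + (M/m + m/M) * ((1+s)^2 * (1-s)^2) := by
        intro s; field_simp; ring
      rw [expand, expand2, expand3] at hc
      simp only [smul_eq_mul] at hc
      nlinarith [hc]
    set c := M/m + m/M with hc
    by_contra hc6
    push_neg at hc6
    have hc2 : 0 < c + 2 := by positivity
    set ε : ℝ := (c - 6) / (c + 2) with hε
    have hεpos : 0 < ε := div_pos (by linarith) hc2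
    have ht := hineq (Real.sqrt ε)
    rw [show Real.sqrt ε ^ 4 = (Real.sqrt ε ^2)^2 by ring] at ht
    rw [Real.sq_sqrt hεpos.le] at ht
    have hεlt : (c + 2) * ε = c - 6 := by
      rw [hε]; field_simp
    have h3 : 0 < (c + 2) * (ε * ε) := mul_pos hc2 (mul_pos hεpos hεpos)
    nlinarith [ht, hεlt, h3, hεpos]
  -- conclude
  have h1 : 0 < M / m := div_pos hMpos hmpos
  have h2 : (M/m) * (m/M) = 1 := by field_simp
  have hquad : (M/m)^2 + 1 ≤ 6 * (M/m) := by
    nlinarith [mul_le_mul_of_nonneg_left hkey h1.le, h2]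
  have hspos : 0 < Real.sqrt 2 := Real.sqrt_pos.mpr two_pos
  nlinarith [hquad, hs2, hspos, sq_nonneg (M/m - 3 - 2*Real.sqrt 2)]
end

section
/- Let Λ be an n×n diagonal matrix with positive diagonal entries λ₁, …, λₙ, and set Δᵢⱼ = λᵢ/λⱼ + λⱼ/λᵢ for i ≠ j. Then the Kantorovich function K(x) = (xᵀΛx)(xᵀΛ⁻¹x) is convex on ℝⁿ if and only if for every y ∈ ℝⁿ the n×n symmetric matrix H_n(Δ, y), whose (i,i) entry is 3yᵢ² + ½ Σ_{k≠i} Δᵢₖ yₖ² and whose (i,j) entry for i ≠ j is Δᵢⱼ yᵢ yⱼ, is positive semidefinite. -/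
open Matrix

private lemma Pnonneg {A C b a g c : ℝ} (ha : 0 ≤ a) (hg : 0 ≤ g)
    (h : ∀ t : ℝ, A * C ≤ 1/2 * ((A + 2*b*t + a*t^2) * (C + 2*c*t + g*t^2))
        + 1/2 * ((A + 2*b*(-t) + a*(-t)^2) * (C + 2*c*(-t) + g*(-t)^2))) :
    0 ≤ 1/2 * (A * g + C * a) + 2 * (b * c) := by
  have hkey : ∀ t : ℝ, 0 ≤ (A*g + a*C + 4*b*c) * t^2 + (a*g)*t^4 := by
    intro t
    have h2 := h t
    have h3 : (A*g + a*C + 4*b*c) * t^2 + (a*g)*t^4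
        = 1/2 * ((A + 2*b*t + a*t^2) * (C + 2*c*t + g*t^2))
        + 1/2 * ((A + 2*b*(-t) + a*(-t)^2) * (C + 2*c*(-t) + g*(-t)^2)) - A*C := by ring
    rw [h3]; linarith
  have hag : 0 ≤ a*g := mul_nonneg ha hg
  have hP : 0 ≤ A*g + a*C + 4*b*c := by
    by_contra hc; push_neg at hc
    rcases eq_or_lt_of_le hag with h0 | h0
    · have := hkey 1; nlinarith
    · set s : ℝ := -(A*g + a*C + 4*b*c) / (2*(a*g)) with hsdef
      have hs : 0 < s := div_pos (by linarith) (by linarith)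
      have h2 := hkey (Real.sqrt s)
      have hsq : (Real.sqrt s)^2 = s := Real.sq_sqrt hs.le
      have hq4 : (Real.sqrt s)^4 = s^2 := by
        rw [show (4:ℕ) = 2*2 from rfl, pow_mul, hsq]
      rw [hsq, hq4] at h2
      have hmul : (a*g) * s = -(A*g + a*C + 4*b*c) / 2 := by
        rw [hsdef]; rw [mul_div_assoc', div_eq_div_iff (mul_pos two_pos h0).ne' two_ne_zero]; ring
      have h3 : (a*g)*s^2 = (-(A*g + a*C + 4*b*c)/2)*s := by
        rw [pow_two, ← mul_assoc, hmul]
      rw [h3] at h2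
      nlinarith [h2, hs]
  linarith

private lemma quartic_convex (A b a C c g : ℝ)
    (h : ∀ t : ℝ, 0 ≤ 1/2 * ((A + 2*b*t + a*t^2) * g + (C + 2*c*t + g*t^2) * a)
         + 2 * ((b + a*t) * (c + g*t))) :
    ConvexOn ℝ Set.univ (fun t : ℝ => (A + 2*b*t + a*t^2) * (C + 2*c*t + g*t^2)) := by
  have Hd1 : ∀ t : ℝ, HasDerivAt (fun t : ℝ => (A + 2*b*t + a*t^2) * (C + 2*c*t + g*t^2))
      ((2*b + 2*a*t)*(C + 2*c*t + g*t^2) + (A + 2*b*t + a*t^2)*(2*c + 2*g*t)) t := by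
    intro t
    have h1 : HasDerivAt (fun t : ℝ => A + 2*b*t + a*t^2) (2*b + 2*a*t) t := by
      have := ((hasDerivAt_const t A).add ((hasDerivAt_id t).const_mul (2*b))).add
        ((hasDerivAt_pow 2 t).const_mul a)
      refine this.congr_deriv ?_
      push_cast; ring
    have h2 : HasDerivAt (fun t : ℝ => C + 2*c*t + g*t^2) (2*c + 2*g*t) t := by
      have := ((hasDerivAt_const t C).add ((hasDerivAt_id t).const_mul (2*c))).add
        ((hasDerivAt_pow 2 t).const_mul g)
      refine this.congr_deriv ?_
      push_cast; ring
    exact h1.mul h2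
  have Hd2 : ∀ t : ℝ, HasDerivAt (fun t : ℝ =>
        (2*b + 2*a*t)*(C + 2*c*t + g*t^2) + (A + 2*b*t + a*t^2)*(2*c + 2*g*t))
      ((2*a)*(C + 2*c*t + g*t^2) + (2*b + 2*a*t)*(2*c + 2*g*t)
        + ((2*b + 2*a*t)*(2*c + 2*g*t) + (A + 2*b*t + a*t^2)*(2*g))) t := by
    intro t
    have hp : HasDerivAt (fun t : ℝ => A + 2*b*t + a*t^2) (2*b + 2*a*t) t := by
      have := ((hasDerivAt_const t A).add ((hasDerivAt_id t).const_mul (2*b))).add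
        ((hasDerivAt_pow 2 t).const_mul a)
      refine this.congr_deriv ?_
      push_cast; ring
    have hq : HasDerivAt (fun t : ℝ => C + 2*c*t + g*t^2) (2*c + 2*g*t) t := by
      have := ((hasDerivAt_const t C).add ((hasDerivAt_id t).const_mul (2*c))).add
        ((hasDerivAt_pow 2 t).const_mul g)
      refine this.congr_deriv ?_
      push_cast; ring
    have hp' : HasDerivAt (fun t : ℝ => 2*b + 2*a*t) (2*a) t := by
      have := (hasDerivAt_const t (2*b)).add ((hasDerivAt_id t).const_mul (2*a))
      refine this.congr_deriv ?_
      ring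
    have hq' : HasDerivAt (fun t : ℝ => 2*c + 2*g*t) (2*g) t := by
      have := (hasDerivAt_const t (2*c)).add ((hasDerivAt_id t).const_mul (2*g))
      refine this.congr_deriv ?_
      ring
    exact (hp'.mul hq).add (hp.mul hq')
  have hder : deriv (fun t : ℝ => (A + 2*b*t + a*t^2) * (C + 2*c*t + g*t^2))
      = fun t => (2*b + 2*a*t)*(C + 2*c*t + g*t^2) + (A + 2*b*t + a*t^2)*(2*c + 2*g*t) :=
    funext fun t => (Hd1 t).deriv
  apply convexOn_of_deriv2_nonneg convex_univ
  · exact Continuous.continuousOn (by continuity)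
  · exact Differentiable.differentiableOn (fun t => (Hd1 t).differentiableAt)
  · rw [hder]; exact Differentiable.differentiableOn (fun t => (Hd2 t).differentiableAt)
  · intro t _
    have hit : deriv^[2] (fun t : ℝ => (A + 2*b*t + a*t^2) * (C + 2*c*t + g*t^2)) t
        = (2*a)*(C + 2*c*t + g*t^2) + (2*b + 2*a*t)*(2*c + 2*g*t)
          + ((2*b + 2*a*t)*(2*c + 2*g*t) + (A + 2*b*t + a*t^2)*(2*g)) := by
      rw [show deriv^[2] (fun t : ℝ => (A + 2*b*t + a*t^2) * (C + 2*c*t + g*t^2))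
          = deriv (deriv (fun t : ℝ => (A + 2*b*t + a*t^2) * (C + 2*c*t + g*t^2))) from rfl,
        hder]
      exact (Hd2 t).deriv
    rw [hit]
    have h4 := h t
    nlinarith [h4]


private lemma sumA {n : ℕ} (lam z w : Fin n → ℝ) (t : ℝ) :
    ∑ i, lam i * (z i + t * w i) ^ 2
      = (∑ i, lam i * z i ^ 2) + 2 * (∑ i, lam i * z i * w i) * t
        + (∑ i, lam i * w i ^ 2) * t ^ 2 := by
  have h : ∀ i : Fin n, lam i * (z i + t * w i) ^ 2
      = lam i * z i ^ 2 + (lam i * z i * w i) * (2 * t) + (lam i * w i ^ 2) * t ^ 2 :=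
    fun i => by ring
  rw [Finset.sum_congr rfl fun i _ => h i, Finset.sum_add_distrib, Finset.sum_add_distrib,
    ← Finset.sum_mul, ← Finset.sum_mul]
  ring

private lemma sumB {n : ℕ} (lam z w : Fin n → ℝ) (t : ℝ) :
    ∑ i, (z i + t * w i) ^ 2 / lam i
      = (∑ i, z i ^ 2 / lam i) + 2 * (∑ i, z i * w i / lam i) * t
        + (∑ i, w i ^ 2 / lam i) * t ^ 2 := by
  have h : ∀ i : Fin n, (z i + t * w i) ^ 2 / lam i
      = z i ^ 2 / lam i + (z i * w i / lam i) * (2 * t) + (w i ^ 2 / lam i) * t ^ 2 :=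
    fun i => by ring
  rw [Finset.sum_congr rfl fun i _ => h i, Finset.sum_add_distrib, Finset.sum_add_distrib,
    ← Finset.sum_mul, ← Finset.sum_mul]
  ring

private lemma sumC {n : ℕ} (lam z w : Fin n → ℝ) (t : ℝ) :
    ∑ i, lam i * (z i + t * w i) * w i
      = (∑ i, lam i * z i * w i) + (∑ i, lam i * w i ^ 2) * t := by
  have h : ∀ i : Fin n, lam i * (z i + t * w i) * w i
      = lam i * z i * w i + (lam i * w i ^ 2) * t := fun i => by ring
  rw [Finset.sum_congr rfl fun i _ => h i, Finset.sum_add_distrib, ← Finset.sum_mul]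

private lemma sumD {n : ℕ} (lam z w : Fin n → ℝ) (t : ℝ) :
    ∑ i, (z i + t * w i) * w i / lam i
      = (∑ i, z i * w i / lam i) + (∑ i, w i ^ 2 / lam i) * t := by
  have h : ∀ i : Fin n, (z i + t * w i) * w i / lam i
      = z i * w i / lam i + (w i ^ 2 / lam i) * t := fun i => by ring
  rw [Finset.sum_congr rfl fun i _ => h i, Finset.sum_add_distrib, ← Finset.sum_mul]

private lemma quad_eq {n : ℕ} (lam : Fin n → ℝ) (hlam : ∀ i, lam i ≠ 0) (x y : Fin n → ℝ) :
    x ⬝ᵥ ((Matrix.of fun i j =>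
        if i = j then
          3 * y i ^ 2 + (1 : ℝ) / 2 *
            ∑ k ∈ Finset.univ.erase i, (lam i / lam k + lam k / lam i) * y k ^ 2
        else (lam i / lam j + lam j / lam i) * y i * y j) *ᵥ x) =
      (1 / 2) * ((∑ i, lam i * x i ^ 2) * (∑ i, y i ^ 2 / lam i)
        + (∑ i, x i ^ 2 / lam i) * (∑ i, lam i * y i ^ 2))
      + 2 * ((∑ i, lam i * x i * y i) * (∑ i, x i * y i / lam i)) := by
  have hEii : ∀ i : Fin n, lam i / lam i + lam i / lam i = 2 := fun i => by
    rw [div_self (hlam i)]; norm_num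
  have hrow : ∀ i : Fin n,
      (∑ j, (if i = j then
          3 * y i ^ 2 + (1 : ℝ) / 2 *
            ∑ k ∈ Finset.univ.erase i, (lam i / lam k + lam k / lam i) * y k ^ 2
        else (lam i / lam j + lam j / lam i) * y i * y j) * x j)
      = (∑ j, ((lam i / lam j + lam j / lam i) * y i * y j) * x j)
        + ((1 : ℝ) / 2 * ∑ j, (lam i / lam j + lam j / lam i) * y j ^ 2) * x i := by
    intro i
    have hsplit : ∀ j : Fin n,
        (if i = j then
            3 * y i ^ 2 + (1 : ℝ) / 2 *
              ∑ k ∈ Finset.univ.erase i, (lam i / lam k + lam k / lam i) * y k ^ 2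
          else (lam i / lam j + lam j / lam i) * y i * y j) * x j
        = ((lam i / lam j + lam j / lam i) * y i * y j) * x j
          + (if i = j then
              ((1 : ℝ) / 2 * ∑ k, (lam i / lam k + lam k / lam i) * y k ^ 2) * x i else 0) := by
      intro j
      by_cases h : i = j
      · subst h
        rw [if_pos rfl, if_pos rfl]
        have hS : (∑ k, (lam i / lam k + lam k / lam i) * y k ^ 2)
            = (lam i / lam i + lam i / lam i) * y i ^ 2
              + ∑ k ∈ Finset.univ.erase i, (lam i / lam k + lam k / lam i) * y k ^ 2 :=
          (Finset.add_sum_erase _ _ (Finset.mem_univ i)).symm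
        rw [hS]
        simp only [hEii i]
        ring
      · rw [if_neg h, if_neg h]; ring
    rw [Finset.sum_congr rfl fun j _ => hsplit j, Finset.sum_add_distrib, Finset.sum_ite_eq]
    simp
  have hprod : ∀ u v : Fin n → ℝ,
      (∑ i, ∑ j, u i * v j) = (∑ i, u i) * (∑ j, v j) := fun u v =>
    (Finset.sum_mul_sum _ _ _ _).symm
  have hsym : (∑ i, ∑ j, (lam j / lam i) * ((x i * y i) * (x j * y j)))
      = ∑ i, ∑ j, (lam i / lam j) * ((x i * y i) * (x j * y j)) := by
    rw [Finset.sum_comm]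
    exact Finset.sum_congr rfl fun i _ => Finset.sum_congr rfl fun j _ => by ring
  calc x ⬝ᵥ ((Matrix.of fun i j =>
        if i = j then
          3 * y i ^ 2 + (1 : ℝ) / 2 *
            ∑ k ∈ Finset.univ.erase i, (lam i / lam k + lam k / lam i) * y k ^ 2
        else (lam i / lam j + lam j / lam i) * y i * y j) *ᵥ x)
      = ∑ i, x i * ((∑ j, ((lam i / lam j + lam j / lam i) * y i * y j) * x j)
          + ((1 : ℝ) / 2 * ∑ j, (lam i / lam j + lam j / lam i) * y j ^ 2) * x i) := by
        simp only [dotProduct, mulVec, of_apply]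
        exact Finset.sum_congr rfl fun i _ => by rw [hrow i]
    _ = ∑ i, ∑ j, ((lam i / lam j) * ((x i * y i) * (x j * y j))
          + (lam j / lam i) * ((x i * y i) * (x j * y j))
          + ((1 / 2) * ((lam i * x i ^ 2) * (y j ^ 2 / lam j))
            + (1 / 2) * ((x i ^ 2 / lam i) * (lam j * y j ^ 2)))) := by
        refine Finset.sum_congr rfl fun i _ => ?_
        rw [mul_add, Finset.mul_sum]
        rw [show x i * (((1 : ℝ) / 2 * ∑ j, (lam i / lam j + lam j / lam i) * y j ^ 2) * x i)
            = (∑ j, (lam i / lam j + lam j / lam i) * y j ^ 2) * ((1 / 2) * x i ^ 2) from by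
          ring, Finset.sum_mul, ← Finset.sum_add_distrib]
        exact Finset.sum_congr rfl fun j _ => by ring
    _ = (1 / 2) * ((∑ i, lam i * x i ^ 2) * (∑ i, y i ^ 2 / lam i)
          + (∑ i, x i ^ 2 / lam i) * (∑ i, lam i * y i ^ 2))
        + 2 * ((∑ i, lam i * x i * y i) * (∑ i, x i * y i / lam i)) := by
        simp only [Finset.sum_add_distrib]
        rw [hsym]
        rw [show (∑ i, ∑ j, (lam i / lam j) * ((x i * y i) * (x j * y j)))
            = ∑ i, ∑ j, (lam i * x i * y i) * (x j * y j / lam j) from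
          Finset.sum_congr rfl fun i _ => Finset.sum_congr rfl fun j _ => by ring]
        rw [show (∑ i, ∑ j, (1 / 2 : ℝ) * ((lam i * x i ^ 2) * (y j ^ 2 / lam j)))
            = ∑ i, ∑ j, ((1 / 2 : ℝ) * (lam i * x i ^ 2)) * (y j ^ 2 / lam j) from
          Finset.sum_congr rfl fun i _ => Finset.sum_congr rfl fun j _ => by ring]
        rw [show (∑ i, ∑ j, (1 / 2 : ℝ) * ((x i ^ 2 / lam i) * (lam j * y j ^ 2)))
            = ∑ i, ∑ j, ((1 / 2 : ℝ) * (x i ^ 2 / lam i)) * (lam j * y j ^ 2) from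
          Finset.sum_congr rfl fun i _ => Finset.sum_congr rfl fun j _ => by ring]
        rw [hprod, hprod, hprod]
        rw [show (∑ i, (1 / 2 : ℝ) * (lam i * x i ^ 2)) = (1 / 2 : ℝ) * ∑ i, lam i * x i ^ 2 from
          (Finset.mul_sum _ _ _).symm]
        rw [show (∑ i, (1 / 2 : ℝ) * (x i ^ 2 / lam i)) = (1 / 2 : ℝ) * ∑ i, x i ^ 2 / lam i from
          (Finset.mul_sum _ _ _).symm]
        ring
/-- Let `Λ` be a diagonal matrix with positive diagonal entries `λ₁, …, λₙ`
and `Δᵢⱼ = λᵢ/λⱼ + λⱼ/λᵢ`. The Kantorovich function `K(x) = (xᵀΛx)(xᵀΛ⁻¹x)` is convex on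
`ℝⁿ` if and only if for every `y ∈ ℝⁿ` the matrix `Hₙ(Δ, y)`, with `(i,i)` entry
`3yᵢ² + ½ Σ_{k ≠ i} Δᵢₖ yₖ²` and `(i,j)` entry `Δᵢⱼ yᵢ yⱼ` for `i ≠ j`,
is positive semidefinite. -/
theorem kantorovich_diagonal_convex_iff_H_posSemidef {n : ℕ}
    (lam : Fin n → ℝ) (hlam : ∀ i, 0 < lam i) :
    ConvexOn ℝ Set.univ
      (fun x : Fin n → ℝ =>
        (x ⬝ᵥ (Matrix.diagonal lam *ᵥ x)) * (x ⬝ᵥ ((Matrix.diagonal lam)⁻¹ *ᵥ x))) ↔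
    ∀ y : Fin n → ℝ,
      (Matrix.of fun i j =>
        if i = j then
          3 * y i ^ 2 + (1 : ℝ) / 2 *
            ∑ k ∈ Finset.univ.erase i, (lam i / lam k + lam k / lam i) * y k ^ 2
        else (lam i / lam j + lam j / lam i) * y i * y j).PosSemidef := by
  have hne : ∀ i, lam i ≠ 0 := fun i => (hlam i).ne'
  have hinv : (Matrix.diagonal lam)⁻¹ = Matrix.diagonal (fun i => (lam i)⁻¹) := by
    apply inv_eq_right_inv
    rw [diagonal_mul_diagonal]
    rw [show (fun i => lam i * (lam i)⁻¹) = fun _ : Fin n => (1:ℝ) from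
      funext fun i => mul_inv_cancel₀ (hne i)]
    exact diagonal_one
  have hKfun : (fun x : Fin n → ℝ =>
      (x ⬝ᵥ (Matrix.diagonal lam *ᵥ x)) * (x ⬝ᵥ ((Matrix.diagonal lam)⁻¹ *ᵥ x)))
      = fun x : Fin n → ℝ => (∑ i, lam i * x i ^ 2) * (∑ i, x i ^ 2 / lam i) := by
    funext x
    rw [hinv]
    congr 1
    · simp only [dotProduct, mulVec_diagonal]
      exact Finset.sum_congr rfl fun i _ => by ring
    · simp only [dotProduct, mulVec_diagonal]
      exact Finset.sum_congr rfl fun i _ => by rw [div_eq_mul_inv]; ring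
  rw [hKfun]
  constructor
  · -- convexity implies PSD
    intro hconv y
    refine Matrix.PosSemidef.of_dotProduct_mulVec_nonneg ?_ ?_
    · show _ᴴ = _
      ext i j
      simp only [conjTranspose_apply, of_apply, star_trivial]
      by_cases h : i = j
      · subst h; rfl
      · rw [if_neg (Ne.symm h), if_neg h]; ring
    · intro v
      rw [show (star v : Fin n → ℝ) = v from rfl]
      rw [quad_eq lam hne v y]
      apply Pnonneg (A := ∑ i, lam i * v i ^ 2) (C := ∑ i, v i ^ 2 / lam i)
        (b := ∑ i, lam i * v i * y i) (a := ∑ i, lam i * y i ^ 2)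
        (g := ∑ i, y i ^ 2 / lam i) (c := ∑ i, v i * y i / lam i)
      · exact Finset.sum_nonneg fun i _ => mul_nonneg (hlam i).le (sq_nonneg _)
      · exact Finset.sum_nonneg fun i _ => div_nonneg (sq_nonneg _) (hlam i).le
      · intro t
        have h2 := hconv.2 (Set.mem_univ (v + t • y)) (Set.mem_univ (v + (-t) • y))
          (by norm_num : (0:ℝ) ≤ 1/2) (by norm_num : (0:ℝ) ≤ 1/2)
          (by norm_num : (1/2 : ℝ) + 1/2 = 1)
        have hpt : ((1:ℝ)/2) • (v + t • y) + ((1:ℝ)/2) • (v + (-t) • y) = v := by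
          funext i
          simp only [Pi.add_apply, Pi.smul_apply, smul_eq_mul]
          ring
        rw [hpt] at h2
        simp only [Pi.add_apply, Pi.smul_apply, smul_eq_mul] at h2
        rw [sumA lam v y t, sumB lam v y t, sumA lam v y (-t), sumB lam v y (-t)] at h2
        linarith [h2]
  · -- PSD implies convexity
    intro hH
    refine ⟨convex_univ, ?_⟩
    intro p _ q _ aw bw haw hbw habw
    have hcond : ∀ t : ℝ, 0 ≤ 1/2 * (((∑ i, lam i * p i ^ 2)
          + 2*(∑ i, lam i * p i * (q i - p i))*t + (∑ i, lam i * (q i - p i) ^ 2)*t^2)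
            * (∑ i, (q i - p i) ^ 2 / lam i)
          + ((∑ i, p i ^ 2 / lam i) + 2*(∑ i, p i * (q i - p i) / lam i)*t
            + (∑ i, (q i - p i) ^ 2 / lam i)*t^2) * (∑ i, lam i * (q i - p i) ^ 2))
        + 2 * (((∑ i, lam i * p i * (q i - p i)) + (∑ i, lam i * (q i - p i) ^ 2)*t)
          * ((∑ i, p i * (q i - p i) / lam i) + (∑ i, (q i - p i) ^ 2 / lam i)*t)) := by
      intro t
      have h0 := (hH (fun i => q i - p i)).dotProduct_mulVec_nonneg (fun i => p i + t * (q i - p i))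
      rw [show (star (fun i => p i + t * (q i - p i)) : Fin n → ℝ)
          = (fun i => p i + t * (q i - p i)) from rfl] at h0
      rw [quad_eq lam hne (fun i => p i + t * (q i - p i)) (fun i => q i - p i)] at h0
      simp only [sumA lam p (fun i => q i - p i) t, sumB lam p (fun i => q i - p i) t,
        sumC lam p (fun i => q i - p i) t, sumD lam p (fun i => q i - p i) t] at h0
      linarith [h0]
    have hcv := quartic_convex (∑ i, lam i * p i ^ 2) (∑ i, lam i * p i * (q i - p i))
      (∑ i, lam i * (q i - p i) ^ 2) (∑ i, p i ^ 2 / lam i)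
      (∑ i, p i * (q i - p i) / lam i) (∑ i, (q i - p i) ^ 2 / lam i)
      (fun t => by linarith [hcond t])
    have h01 := hcv.2 (Set.mem_univ (0:ℝ)) (Set.mem_univ (1:ℝ)) haw hbw habw
    simp only [smul_eq_mul, mul_zero, mul_one, zero_add] at h01
    have hvec : (aw • p + bw • q) = fun i => p i + bw * (q i - p i) := by
      funext i
      simp only [Pi.add_apply, Pi.smul_apply, smul_eq_mul]
      have haw1 : aw = 1 - bw := by linarith
      rw [haw1]; ring
    rw [hvec]
    simp only []
    rw [sumA lam p (fun i => q i - p i) bw, sumB lam p (fun i => q i - p i) bw]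
    have hq1 : (∑ i, lam i * q i ^ 2) = (∑ i, lam i * p i ^ 2)
        + 2 * (∑ i, lam i * p i * (q i - p i)) * 1
        + (∑ i, lam i * (q i - p i) ^ 2) * 1 ^ 2 := by
      rw [← sumA lam p (fun i => q i - p i) 1]
      exact Finset.sum_congr rfl fun i _ => by ring
    have hq2 : (∑ i, q i ^ 2 / lam i) = (∑ i, p i ^ 2 / lam i)
        + 2 * (∑ i, p i * (q i - p i) / lam i) * 1
        + (∑ i, (q i - p i) ^ 2 / lam i) * 1 ^ 2 := by
      rw [← sumB lam p (fun i => q i - p i) 1]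
      exact Finset.sum_congr rfl fun i _ => by ring
    rw [hq1, hq2]
    simp only [smul_eq_mul]
    linarith [h01]
end

section
/- Let n ≥ 2 and let Δ = (Δᵢⱼ) be a symmetric array of reals with Δᵢⱼ = Δⱼᵢ ≥ 2 for all i ≠ j. If for every y ∈ ℝⁿ the n×n symmetric matrix H_n(Δ, y), whose (i,i) entry is 3yᵢ² + ½ Σ_{k≠i} Δᵢₖ yₖ² and whose (i,j) entry for i ≠ j is Δᵢⱼ yᵢ yⱼ, is positive semidefinite, then Δᵢⱼ ≤ 6 for all i ≠ j. -/
open Matrix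

/-- Let `n ≥ 2` and let `Δ` be a symmetric array of reals with
`Δᵢⱼ = Δⱼᵢ ≥ 2` for `i ≠ j`. If for every `y ∈ ℝⁿ` the matrix `Hₙ(Δ, y)`, with `(i,i)`
entry `3yᵢ² + ½ Σ_{k ≠ i} Δᵢₖ yₖ²` and `(i,j)` entry `Δᵢⱼ yᵢ yⱼ` for `i ≠ j`, is positive
semidefinite, then `Δᵢⱼ ≤ 6` for all `i ≠ j`. -/
theorem delta_le_six_of_H_posSemidef {n : ℕ} (hn : 2 ≤ n)
    (Δ : Fin n → Fin n → ℝ)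
    (hsymm : ∀ i j, i ≠ j → Δ i j = Δ j i)
    (hge : ∀ i j, i ≠ j → 2 ≤ Δ i j)
    (hpsd : ∀ y : Fin n → ℝ,
      (Matrix.of fun i j =>
        if i = j then
          3 * y i ^ 2 + (1 : ℝ) / 2 * ∑ k ∈ Finset.univ.erase i, Δ i k * y k ^ 2
        else Δ i j * y i * y j).PosSemidef) :
    ∀ i j, i ≠ j → Δ i j ≤ 6 := by
  intro i j hij
  set y : Fin n → ℝ := fun k => if k = i ∨ k = j then 1 else 0 with hy
  set M : Matrix (Fin n) (Fin n) ℝ :=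
    Matrix.of fun a b =>
      if a = b then
        3 * y a ^ 2 + (1 : ℝ) / 2 * ∑ k ∈ Finset.univ.erase a, Δ a k * y k ^ 2
      else Δ a b * y a * y b with hM
  set x : Fin n → ℝ := fun k => if k = i then 1 else if k = j then -1 else 0 with hx
  have h := (hpsd y).dotProduct_mulVec_nonneg x
  have hstar : star x = x := by ext k; simp [hx]
  rw [hstar] at h
  -- compute mulVec entries
  have hmv : ∀ a : Fin n, (M *ᵥ x) a = M a i - M a j := by
    intro a
    have : (M *ᵥ x) a = ∑ b, M a b * x b := rfl
    rw [this]
    rw [← Finset.sum_subset (Finset.subset_univ ({i, j} : Finset (Fin n)))]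
    · rw [Finset.sum_pair hij]
      simp [hx, hij, hij.symm]
      ring
    · intro b _ hb
      simp only [Finset.mem_insert, Finset.mem_singleton, not_or] at hb
      simp [hx, hb.1, hb.2]
  have hdot : dotProduct x (M *ᵥ x) = M i i - M i j - M j i + M j j := by
    unfold dotProduct
    rw [← Finset.sum_subset (Finset.subset_univ ({i, j} : Finset (Fin n)))]
    · rw [Finset.sum_pair hij, hmv i, hmv j]
      simp [hx, hij, hij.symm]
      ring
    · intro b _ hb
      simp only [Finset.mem_insert, Finset.mem_singleton, not_or] at hb
      simp [hx, hb.1, hb.2]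
  -- compute entries
  have hsumi : ∑ k ∈ Finset.univ.erase i, Δ i k * y k ^ 2 = Δ i j := by
    rw [Finset.sum_eq_single_of_mem j (Finset.mem_erase.2 ⟨hij.symm, Finset.mem_univ j⟩)]
    · simp [hy]
    · intro b _ hb
      have hbi : b ≠ i := (Finset.mem_erase.1 ‹b ∈ Finset.univ.erase i›).1
      simp [hy, hbi, hb]
  have hsumj : ∑ k ∈ Finset.univ.erase j, Δ j k * y k ^ 2 = Δ j i := by
    rw [Finset.sum_eq_single_of_mem i (Finset.mem_erase.2 ⟨hij, Finset.mem_univ i⟩)]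
    · simp [hy]
    · intro b hbmem hb
      have hbj : b ≠ j := (Finset.mem_erase.1 hbmem).1
      simp [hy, hb, hbj]
  have hyi : y i = 1 := by simp [hy]
  have hyj : y j = 1 := by simp [hy]
  have hMii : M i i = 3 + (1:ℝ)/2 * Δ i j := by
    have h1 : M i i = 3 * y i ^ 2 + (1:ℝ)/2 * ∑ k ∈ Finset.univ.erase i, Δ i k * y k ^ 2 :=
      if_pos rfl
    rw [h1, hsumi, hyi]; ring
  have hMjj : M j j = 3 + (1:ℝ)/2 * Δ j i := by
    have h1 : M j j = 3 * y j ^ 2 + (1:ℝ)/2 * ∑ k ∈ Finset.univ.erase j, Δ j k * y k ^ 2 :=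
      if_pos rfl
    rw [h1, hsumj, hyj]; ring
  have hMij : M i j = Δ i j := by simp [hM, hy, hij]
  have hMji : M j i = Δ j i := by simp [hM, hy, hij.symm]
  rw [hdot, hMii, hMjj, hMij, hMji, hsymm i j hij] at h
  linarith [hsymm i j hij]
end

section
/- Let A be a 2×2 real symmetric positive definite matrix. Then the Kantorovich function K(x) = (xᵀAx)(xᵀA⁻¹x) is convex on ℝ² if and only if the condition number κ(A) is at most 3 + 2√2. -/
open Matrix

lemma pow4_lin (c0 c1 : ℝ) :
    ConvexOn ℝ Set.univ (fun y : Fin 2 → ℝ => (c0 * y 0 + c1 * y 1) ^ 4) := by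
  have h := (by decide : Even 4).convexOn_pow (𝕜 := ℝ)
  refine ⟨convex_univ, fun x _ y _ a b ha hb hab => ?_⟩
  have h2 := h.2 (Set.mem_univ (c0 * x 0 + c1 * x 1)) (Set.mem_univ (c0 * y 0 + c1 * y 1)) ha hb hab
  simp only [smul_eq_mul, Pi.add_apply, Pi.smul_apply] at h2 ⊢
  convert h2 using 2
  ring

lemma quartic_convex_iff {t : ℝ} (ht : 0 ≤ t) :
    ConvexOn ℝ Set.univ
      (fun y : Fin 2 → ℝ => (y 0) ^ 4 + (y 1) ^ 4 + t * ((y 0) ^ 2 * (y 1) ^ 2)) ↔ t ≤ 6 := by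
  constructor
  · intro hc
    by_contra h6
    push_neg at h6
    set s : ℝ := Real.sqrt ((t - 6) / (t + 2)) with hs
    have ht2 : (0:ℝ) < t + 2 := by linarith
    have hq : 0 < (t - 6) / (t + 2) := div_pos (by linarith) ht2
    have hsq : s ^ 2 = (t - 6) / (t + 2) := Real.sq_sqrt hq.le
    have hspos : 0 < s ^ 2 := hsq ▸ hq
    have hr : (t + 2) * s ^ 2 = t - 6 := by rw [hsq]; field_simp
    have hkey := hc.2 (Set.mem_univ ![1 + s, 1 - s]) (Set.mem_univ ![1 - s, 1 + s])
      (by norm_num : (0:ℝ) ≤ 1/2) (by norm_num : (0:ℝ) ≤ 1/2) (by norm_num)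
    have hmid : (1/2 : ℝ) • ![1 + s, 1 - s] + (1/2 : ℝ) • ![1 - s, 1 + s] = ![1, 1] := by
      funext i; fin_cases i <;> simp <;> ring
    rw [hmid] at hkey
    simp only [Matrix.cons_val_zero, Matrix.cons_val_one, Matrix.head_cons, smul_eq_mul] at hkey
    nlinarith [hkey, hr, hspos, h6]
  · intro h6
    have heq : (fun y : Fin 2 → ℝ => (y 0) ^ 4 + (y 1) ^ 4 + t * ((y 0) ^ 2 * (y 1) ^ 2)) =
        (fun y : Fin 2 → ℝ =>
          (1 - t/6) * ((1 * y 0 + 0 * y 1) ^ 4) + ((1 - t/6) * ((0 * y 0 + 1 * y 1) ^ 4) +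
          (t/12 * ((1 * y 0 + 1 * y 1) ^ 4) + t/12 * ((1 * y 0 + (-1) * y 1) ^ 4)))) := by
      funext y; ring
    rw [heq]
    have h1 : (0:ℝ) ≤ 1 - t/6 := by linarith
    have h2 : (0:ℝ) ≤ t/12 := by linarith
    exact ((pow4_lin 1 0).smul h1).add (((pow4_lin 0 1).smul h1).add
      (((pow4_lin 1 1).smul h2).add ((pow4_lin 1 (-1)).smul h2)))

lemma convexOn_comp_mulVec {f : (Fin 2 → ℝ) → ℝ} (hf : ConvexOn ℝ Set.univ f)
    (M : Matrix (Fin 2) (Fin 2) ℝ) : ConvexOn ℝ Set.univ (fun x => f (M *ᵥ x)) := by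
  refine ⟨convex_univ, fun x _ y _ a b ha hb hab => ?_⟩
  have := hf.2 (Set.mem_univ (M *ᵥ x)) (Set.mem_univ (M *ᵥ y)) ha hb hab
  simpa [Matrix.mulVec_add, Matrix.mulVec_smul] using this

lemma cond_iff {a b : ℝ} (ha : 0 < a) (hb : 0 < b) (hab : a ≤ b) :
    b / a ≤ 3 + 2 * Real.sqrt 2 ↔ a / b + b / a ≤ 6 := by
  have hs : Real.sqrt 2 ^ 2 = 2 := Real.sq_sqrt (by norm_num)
  have hs1 : (1:ℝ) ≤ Real.sqrt 2 := by nlinarith [Real.sqrt_nonneg 2]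
  rw [div_le_iff₀ ha]
  have h2 : a / b + b / a ≤ 6 ↔ a * a + b * b ≤ 6 * (a * b) := by
    rw [div_add_div _ _ (ne_of_gt hb) (ne_of_gt ha), div_le_iff₀ (mul_pos hb ha)]
    constructor <;> intro h <;> nlinarith
  rw [h2]
  have hsa : 0 ≤ (Real.sqrt 2 - 1) * a := mul_nonneg (by linarith) ha.le
  constructor
  · intro h
    have h1 : 0 ≤ 2 * Real.sqrt 2 * a - (b - 3 * a) := by linarith
    have h1' : 0 ≤ (b - 3 * a) + 2 * Real.sqrt 2 * a := by nlinarith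
    nlinarith [mul_nonneg h1 h1']
  · intro h
    by_contra hc
    push_neg at hc
    have h1 : 0 < b - 3 * a - 2 * Real.sqrt 2 * a := by linarith
    have h1' : 0 < (b - 3 * a) + 2 * Real.sqrt 2 * a := by nlinarith
    nlinarith [mul_pos h1 h1']

lemma quadform_eq (U : Matrix (Fin 2) (Fin 2) ℝ) (d : Fin 2 → ℝ) (x : Fin 2 → ℝ) :
    x ⬝ᵥ ((U * diagonal d * star U) *ᵥ x) =
      d 0 * ((star U *ᵥ x) 0) ^ 2 + d 1 * ((star U *ᵥ x) 1) ^ 2 := by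
  have hsU : star U = Uᵀ := by
    rw [Matrix.star_eq_conjTranspose, Matrix.conjTranspose_eq_transpose_of_trivial]
  rw [← Matrix.mulVec_mulVec, ← Matrix.mulVec_mulVec, Matrix.dotProduct_mulVec,
    ← Matrix.mulVec_transpose, ← hsU]
  simp [dotProduct, Matrix.mulVec_diagonal, Fin.sum_univ_two]
  ring

lemma inv_of_spectral (A : Matrix (Fin 2) (Fin 2) ℝ)
    (U : Matrix (Fin 2) (Fin 2) ℝ) (ev : Fin 2 → ℝ) (hpos : ∀ i, 0 < ev i)
    (hAeq : A = U * diagonal ev * star U)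
    (hUU : star U * U = 1) (hUU' : U * star U = 1) :
    A⁻¹ = U * diagonal (fun i => (ev i)⁻¹) * star U := by
  refine (Matrix.inv_eq_right_inv ?_)
  rw [hAeq]
  calc U * diagonal ev * star U * (U * diagonal (fun i => (ev i)⁻¹) * star U)
      = U * (diagonal ev * ((star U * U) * diagonal (fun i => (ev i)⁻¹))) * star U := by
        noncomm_ring
    _ = U * (diagonal ev * diagonal (fun i => (ev i)⁻¹)) * star U := by rw [hUU, one_mul]
    _ = 1 := by
        rw [Matrix.diagonal_mul_diagonal]
        have : (fun i => ev i * (ev i)⁻¹) = fun _ => (1:ℝ) := by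
          funext i; exact mul_inv_cancel₀ (hpos i).ne'
        rw [this, Matrix.diagonal_one, mul_one, hUU']

lemma iSup_fin2 (f : Fin 2 → ℝ) : (⨆ i, f i) = max (f 0) (f 1) := by
  apply le_antisymm
  · exact ciSup_le fun i => by fin_cases i <;> simp [le_max_left, le_max_right]
  · exact max_le (le_ciSup (Set.Finite.bddAbove (Set.finite_range f)) 0)
      (le_ciSup (Set.Finite.bddAbove (Set.finite_range f)) 1)

lemma iInf_fin2 (f : Fin 2 → ℝ) : (⨅ i, f i) = min (f 0) (f 1) := by
  apply le_antisymm
  · exact le_min (ciInf_le (Set.Finite.bddBelow (Set.finite_range f)) 0)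
      (ciInf_le (Set.Finite.bddBelow (Set.finite_range f)) 1)
  · exact le_ciInf fun i => by fin_cases i <;> simp [min_le_left, min_le_right]

lemma kant_alg {a b : ℝ} (y0 y1 : ℝ) (h0 : a ≠ 0) (h1 : b ≠ 0) :
    (a * y0 ^ 2 + b * y1 ^ 2) * (a⁻¹ * y0 ^ 2 + b⁻¹ * y1 ^ 2) =
      y0 ^ 4 + y1 ^ 4 + (a / b + b / a) * (y0 ^ 2 * y1 ^ 2) := by
  field_simp
  ring

/-- For a `2 × 2` real symmetric positive definite matrix `A`, the Kantorovich
function `K(x) = (xᵀAx)(xᵀA⁻¹x)` is convex on `ℝ²` if and only if the condition number of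
`A` (largest eigenvalue over smallest eigenvalue) is at most `3 + 2√2`. -/
theorem kantorovich_dim2_convex_iff_condNumber_le
    (A : Matrix (Fin 2) (Fin 2) ℝ) (hA : A.PosDef) :
    ConvexOn ℝ Set.univ
      (fun x : Fin 2 → ℝ => (x ⬝ᵥ (A *ᵥ x)) * (x ⬝ᵥ (A⁻¹ *ᵥ x))) ↔
    (⨆ i, hA.1.eigenvalues i) / (⨅ i, hA.1.eigenvalues i) ≤ 3 + 2 * Real.sqrt 2 := by
  set U : Matrix (Fin 2) (Fin 2) ℝ := (hA.1.eigenvectorUnitary : Matrix (Fin 2) (Fin 2) ℝ) with hU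
  set ev : Fin 2 → ℝ := hA.1.eigenvalues with hev
  have hpos : ∀ i, 0 < ev i := hA.eigenvalues_pos
  have hUU : star U * U = 1 := Unitary.coe_star_mul_self hA.1.eigenvectorUnitary
  have hUU' : U * star U = 1 := Unitary.coe_mul_star_self hA.1.eigenvectorUnitary
  have hAeq : A = U * diagonal ev * star U := by
    have hspec := hA.1.spectral_theorem
    have hdiag : diagonal (RCLike.ofReal ∘ hA.1.eigenvalues) = diagonal ev := by
      simp [RCLike.ofReal, hev]
    rw [hspec, hdiag, Unitary.conjStarAlgAut_apply]
  have hInv : A⁻¹ = U * diagonal (fun i => (ev i)⁻¹) * star U :=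
    inv_of_spectral A U ev hpos hAeq hUU hUU'
  set t : ℝ := ev 0 / ev 1 + ev 1 / ev 0 with htdef
  have ht0 : 0 ≤ t := by have h0 := hpos 0; have h1 := hpos 1; positivity
  set Ft : (Fin 2 → ℝ) → ℝ :=
    fun y => (y 0) ^ 4 + (y 1) ^ 4 + t * ((y 0) ^ 2 * (y 1) ^ 2) with hFt
  have hfeq : (fun x : Fin 2 → ℝ => (x ⬝ᵥ (A *ᵥ x)) * (x ⬝ᵥ (A⁻¹ *ᵥ x))) =
      fun x => Ft (star U *ᵥ x) := by
    funext x
    rw [hInv, hAeq, quadform_eq, quadform_eq, hFt, htdef]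
    exact kant_alg _ _ (hpos 0).ne' (hpos 1).ne'
  have hiff1 : ConvexOn ℝ Set.univ
      (fun x : Fin 2 → ℝ => (x ⬝ᵥ (A *ᵥ x)) * (x ⬝ᵥ (A⁻¹ *ᵥ x))) ↔
      ConvexOn ℝ Set.univ Ft := by
    rw [hfeq]
    constructor
    · intro h
      have h2 := convexOn_comp_mulVec h U
      have h3 : (fun y => Ft (star U *ᵥ (U *ᵥ y))) = Ft := by
        funext y
        rw [Matrix.mulVec_mulVec, hUU, Matrix.one_mulVec]
      rwa [h3] at h2
    · intro h
      exact convexOn_comp_mulVec h (star U)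
  rw [hiff1, quartic_convex_iff ht0, iSup_fin2, iInf_fin2]
  rcases le_total (ev 0) (ev 1) with h | h
  · rw [max_eq_right h, min_eq_left h]
    exact (cond_iff (hpos 0) (hpos 1) h).symm
  · rw [max_eq_left h, min_eq_right h, htdef, add_comm]
    exact (cond_iff (hpos 1) (hpos 0) h).symm
end

section
/- Let Δ be a real number with 2 ≤ Δ ≤ 6. Then for every y = (y₁, y₂) ∈ ℝ² the 2×2 symmetric matrix [[3y₁² + ½Δy₂², Δy₁y₂], [Δy₁y₂, 3y₂² + ½Δy₁²]] is positive semidefinite. -/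
open Matrix

/-- For `2 ≤ Δ ≤ 6` and every `y = (y₁, y₂) ∈ ℝ²`, the `2 × 2` symmetric
matrix `[[3y₁² + ½Δy₂², Δy₁y₂], [Δy₁y₂, 3y₂² + ½Δy₁²]]` is positive semidefinite. -/
theorem H2_posSemidef (Δ : ℝ) (h2 : 2 ≤ Δ) (h6 : Δ ≤ 6) (y₁ y₂ : ℝ) :
    (!![3 * y₁ ^ 2 + (1 : ℝ) / 2 * Δ * y₂ ^ 2, Δ * y₁ * y₂;
        Δ * y₁ * y₂, 3 * y₂ ^ 2 + (1 : ℝ) / 2 * Δ * y₁ ^ 2]).PosSemidef := by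
  rw [Matrix.posSemidef_iff_dotProduct_mulVec]
  constructor
  · ext i j; fin_cases i <;> fin_cases j <;>
      simp [Matrix.conjTranspose, Matrix.vecHead, Matrix.vecTail]
  · intro x
    simp only [dotProduct, mulVec, Fin.sum_univ_two, Matrix.cons_val', Matrix.cons_val_zero,
      Matrix.cons_val_one, Matrix.head_cons, Matrix.empty_val', Matrix.cons_val_fin_one,
      Matrix.head_fin_const, RCLike.star_def, star_trivial, Matrix.of_apply, Matrix.vecHead,
      Matrix.vecTail]
    set a := x 0; set b := x 1
    nlinarith [sq_nonneg (y₁*a + y₂*b), sq_nonneg (y₁*a - y₂*b), sq_nonneg (y₂*a + y₁*b),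
      sq_nonneg (y₂*a - y₁*b), sq_nonneg (y₁*a), sq_nonneg (y₂*b), sq_nonneg (y₂*a),
      sq_nonneg (y₁*b)]
end

section
/- Let ω₁, ω₂, ω₃ ∈ [2, 4] and β ∈ [−1, 1] be fixed. Then the function g(α) = ∂⁴/∂α⁴ det M(ω, α, β) (the fourth derivative in α of the determinant of M(ω, α, β)) is convex in α on [−1, 1] and satisfies g(α) ≥ 0 for all α ∈ [−1, 1]. -/
set_option maxHeartbeats 1000000


open Matrix

/-- The `3 × 3` symmetric matrix `M(ω, α, β)`. -/
noncomputable def Mmat (ω₁ ω₂ ω₃ α β : ℝ) : Matrix (Fin 3) (Fin 3) ℝ :=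
  !![3 + 1 / 2 * ω₁ * α ^ 2 + 1 / 2 * ω₂ * β ^ 2, ω₁ * α, ω₂ * β;
     ω₁ * α, 1 / 2 * ω₁ + 3 * α ^ 2 + 1 / 2 * ω₃ * β ^ 2, ω₃ * α * β;
     ω₂ * β, ω₃ * α * β, 1 / 2 * ω₂ + 1 / 2 * ω₃ * α ^ 2 + 3 * β ^ 2]

private lemma deriv1 (c0 c2 c4 c6 : ℝ) :
    deriv (fun x : ℝ => c0 + c2 * x ^ 2 + c4 * x ^ 4 + c6 * x ^ 6) =
      fun x => 2 * c2 * x + 4 * c4 * x ^ 3 + 6 * c6 * x ^ 5 := by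
  funext x
  have h : HasDerivAt (fun x : ℝ => c0 + c2 * x ^ 2 + c4 * x ^ 4 + c6 * x ^ 6)
      (0 + c2 * (2 * x ^ 1) + c4 * (4 * x ^ 3) + c6 * (6 * x ^ 5)) x := by
    exact (((hasDerivAt_const x c0).add ((hasDerivAt_pow 2 x).const_mul c2)).add
      ((hasDerivAt_pow 4 x).const_mul c4)).add ((hasDerivAt_pow 6 x).const_mul c6)
  rw [h.deriv]; ring

private lemma deriv2 (c2 c4 c6 : ℝ) :
    deriv (fun x : ℝ => 2 * c2 * x + 4 * c4 * x ^ 3 + 6 * c6 * x ^ 5) =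
      fun x => 2 * c2 + 12 * c4 * x ^ 2 + 30 * c6 * x ^ 4 := by
  funext x
  have h : HasDerivAt (fun x : ℝ => 2 * c2 * x + 4 * c4 * x ^ 3 + 6 * c6 * x ^ 5)
      (2 * c2 * 1 + 4 * c4 * (3 * x ^ 2) + 6 * c6 * (5 * x ^ 4)) x := by
    exact (((hasDerivAt_id x).const_mul (2 * c2)).add
      ((hasDerivAt_pow 3 x).const_mul (4 * c4))).add ((hasDerivAt_pow 5 x).const_mul (6 * c6))
  rw [h.deriv]; ring

private lemma deriv3 (c2 c4 c6 : ℝ) :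
    deriv (fun x : ℝ => 2 * c2 + 12 * c4 * x ^ 2 + 30 * c6 * x ^ 4) =
      fun x => 24 * c4 * x + 120 * c6 * x ^ 3 := by
  funext x
  have h : HasDerivAt (fun x : ℝ => 2 * c2 + 12 * c4 * x ^ 2 + 30 * c6 * x ^ 4)
      (0 + 12 * c4 * (2 * x ^ 1) + 30 * c6 * (4 * x ^ 3)) x := by
    exact ((hasDerivAt_const x (2 * c2)).add ((hasDerivAt_pow 2 x).const_mul (12 * c4))).add
      ((hasDerivAt_pow 4 x).const_mul (30 * c6))
  rw [h.deriv]; ring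

private lemma deriv4 (c4 c6 : ℝ) :
    deriv (fun x : ℝ => 24 * c4 * x + 120 * c6 * x ^ 3) =
      fun x => 24 * c4 + 360 * c6 * x ^ 2 := by
  funext x
  have h : HasDerivAt (fun x : ℝ => 24 * c4 * x + 120 * c6 * x ^ 3)
      (24 * c4 * 1 + 120 * c6 * (3 * x ^ 2)) x := by
    exact ((hasDerivAt_id x).const_mul (24 * c4)).add ((hasDerivAt_pow 3 x).const_mul (120 * c6))
  rw [h.deriv]; ring

private lemma iter4 (c0 c2 c4 c6 : ℝ) :
    iteratedDeriv 4 (fun x : ℝ => c0 + c2 * x ^ 2 + c4 * x ^ 4 + c6 * x ^ 6) =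
      fun x => 24 * c4 + 360 * c6 * x ^ 2 := by
  rw [show (4 : ℕ) = 0 + 1 + 1 + 1 + 1 from rfl]
  rw [iteratedDeriv_succ', deriv1, iteratedDeriv_succ', deriv2, iteratedDeriv_succ', deriv3,
    iteratedDeriv_succ', deriv4, iteratedDeriv_zero]

/-- For fixed `ω₁, ω₂, ω₃ ∈ [2, 4]` and `β ∈ [−1, 1]`, the fourth derivative
in `α` of `det M(ω, α, β)` is convex in `α` on `[−1, 1]` and nonnegative there. -/
theorem fourth_deriv_det_M_convex_nonneg (ω₁ ω₂ ω₃ β : ℝ)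
    (h₁ : ω₁ ∈ Set.Icc (2 : ℝ) 4) (h₂ : ω₂ ∈ Set.Icc (2 : ℝ) 4)
    (h₃ : ω₃ ∈ Set.Icc (2 : ℝ) 4) (hβ : β ∈ Set.Icc (-1 : ℝ) 1) :
    ConvexOn ℝ (Set.Icc (-1 : ℝ) 1)
      (iteratedDeriv 4 (fun α : ℝ => (Mmat ω₁ ω₂ ω₃ α β).det)) ∧
    ∀ α ∈ Set.Icc (-1 : ℝ) 1,
      0 ≤ iteratedDeriv 4 (fun α : ℝ => (Mmat ω₁ ω₂ ω₃ α β).det) α := by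
  obtain ⟨h11, h12⟩ := h₁
  obtain ⟨h21, h22⟩ := h₂
  obtain ⟨h31, h32⟩ := h₃
  obtain ⟨hb1, hb2⟩ := hβ
  set c0 : ℝ := 9/2*ω₃*β^4 + 3/4*ω₂*ω₃*β^2 + 3/4*ω₂*ω₃*β^6 - 3/8*ω₂^2*ω₃*β^4
      + 9/2*ω₁*β^2 + 3/4*ω₁*ω₂ + 3/4*ω₁*ω₂*β^4 - 3/8*ω₁*ω₂^2*β^2 with hc0
  set c2 : ℝ := 27*β^2 - 9/4*ω₃^2*β^2 + 9/2*ω₂ + 9/2*ω₂*β^4 - 3/8*ω₂*ω₃^2*β^4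
      - 9/4*ω₂^2*β^2 + 3/4*ω₁*ω₃ + 3/4*ω₁*ω₃*β^4 + 9/4*ω₁*ω₂*ω₃*β^2 - 9/4*ω₁^2*β^2
      - 3/8*ω₁^2*ω₂ with hc2
  set c4 : ℝ := 9/2*ω₃ + 3/4*ω₂*ω₃*β^2 + 9/2*ω₁*β^2 - 3/8*ω₁*ω₃^2*β^2 + 3/4*ω₁*ω₂
      - 3/8*ω₁^2*ω₃ with hc4
  set c6 : ℝ := 3/4*ω₁*ω₃ with hc6
  have hfun : (fun α : ℝ => (Mmat ω₁ ω₂ ω₃ α β).det) =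
      fun x : ℝ => c0 + c2 * x ^ 2 + c4 * x ^ 4 + c6 * x ^ 6 := by
    funext x
    simp only [Mmat, Matrix.det_fin_three, Matrix.cons_val', Matrix.cons_val_zero,
      Matrix.cons_val_one, Matrix.head_cons, Matrix.head_fin_const, Matrix.cons_val_fin_one,
      Matrix.empty_val', Matrix.cons_val_two, Matrix.tail_cons, Matrix.of_apply]
    rw [hc0, hc2, hc4, hc6]; ring
  rw [hfun, iter4]
  -- key nonnegativity facts
  have hA : 0 ≤ 12*ω₃ + 2*ω₁*ω₂ - ω₁^2*ω₃ := by
    nlinarith [mul_nonneg (mul_nonneg (by linarith : (0:ℝ) ≤ 4 - ω₁) (by linarith : (0:ℝ) ≤ ω₁ - 2)) (by linarith : (0:ℝ) ≤ ω₃),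
      mul_nonneg (by linarith : (0:ℝ) ≤ 4 - ω₁) (by linarith : (0:ℝ) ≤ ω₃),
      mul_nonneg (by linarith : (0:ℝ) ≤ ω₁) (by linarith : (0:ℝ) ≤ ω₂ - 2)]
  have hB : 0 ≤ 12*ω₁ + 2*ω₂*ω₃ - ω₁*ω₃^2 := by
    nlinarith [mul_nonneg (mul_nonneg (by linarith : (0:ℝ) ≤ 4 - ω₃) (by linarith : (0:ℝ) ≤ ω₃ - 2)) (by linarith : (0:ℝ) ≤ ω₁),
      mul_nonneg (by linarith : (0:ℝ) ≤ 4 - ω₃) (by linarith : (0:ℝ) ≤ ω₁),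
      mul_nonneg (by linarith : (0:ℝ) ≤ ω₃) (by linarith : (0:ℝ) ≤ ω₂ - 2)]
  have hc4nn : 0 ≤ c4 := by
    rw [hc4]
    nlinarith [mul_nonneg hB (sq_nonneg β)]
  have hc6nn : 0 ≤ c6 := by rw [hc6]; nlinarith
  constructor
  · have hconv : ConvexOn ℝ (Set.univ : Set ℝ)
        (fun x : ℝ => 24 * c4 + 360 * c6 * x ^ 2) := by
      have h1 : ConvexOn ℝ (Set.univ : Set ℝ) (fun x : ℝ => x ^ 2) :=
        Even.convexOn_pow (by norm_num)
      have h2 := h1.smul (by positivity : (0:ℝ) ≤ 360 * c6)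
      have h3 := (convexOn_const (24 * c4) convex_univ).add h2
      exact h3
    exact hconv.subset (Set.subset_univ _) (convex_Icc _ _)
  · intro α _
    show 0 ≤ 24 * c4 + 360 * c6 * α ^ 2
    nlinarith [mul_nonneg hc6nn (sq_nonneg α)]
end

section
/- Let ω₁, ω₂, ω₃ ∈ [2, 4] and β ∈ [−1, 1] be fixed. Then the function h(α) = ∂²/∂α² det M(ω, α, β) (the second derivative in α of the determinant of M(ω, α, β)) is convex in α on [−1, 1], and h(α) ≥ h(0) for all α ∈ [−1, 1]. -/
open Matrix

lemma hasDerivAt_poly6 (a b c d x : ℝ) :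
    HasDerivAt (fun x : ℝ => a + b * x ^ 2 + c * x ^ 4 + d * x ^ 6)
      (2 * b * x + 4 * c * x ^ 3 + 6 * d * x ^ 5) x := by
  have h := (((hasDerivAt_const x a).add ((hasDerivAt_pow 2 x).const_mul b)).add
      ((hasDerivAt_pow 4 x).const_mul c)).add ((hasDerivAt_pow 6 x).const_mul d)
  refine h.congr_deriv ?_
  push_cast
  ring

lemma hasDerivAt_poly5 (b c d x : ℝ) :
    HasDerivAt (fun x : ℝ => 2 * b * x + 4 * c * x ^ 3 + 6 * d * x ^ 5)
      (2 * b + 12 * c * x ^ 2 + 30 * d * x ^ 4) x := by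
  have h := (((hasDerivAt_pow 1 x).const_mul (2 * b)).add
      ((hasDerivAt_pow 3 x).const_mul (4 * c))).add ((hasDerivAt_pow 5 x).const_mul (6 * d))
  refine (h.congr_deriv ?_).congr_of_eventuallyEq (Filter.Eventually.of_forall fun y => ?_)
  · push_cast; ring
  · simp only [Pi.add_apply]; ring

lemma iteratedDeriv_two_poly6 (a b c d : ℝ) :
    iteratedDeriv 2 (fun x : ℝ => a + b * x ^ 2 + c * x ^ 4 + d * x ^ 6)
      = fun x => 2 * b + 12 * c * x ^ 2 + 30 * d * x ^ 4 := by
  have h1 : deriv (fun x : ℝ => a + b * x ^ 2 + c * x ^ 4 + d * x ^ 6)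
      = fun x => 2 * b * x + 4 * c * x ^ 3 + 6 * d * x ^ 5 := by
    funext x; exact (hasDerivAt_poly6 a b c d x).deriv
  have h2 : deriv (fun x : ℝ => 2 * b * x + 4 * c * x ^ 3 + 6 * d * x ^ 5)
      = fun x => 2 * b + 12 * c * x ^ 2 + 30 * d * x ^ 4 := by
    funext x; exact (hasDerivAt_poly5 b c d x).deriv
  rw [show (2 : ℕ) = 0 + 1 + 1 from rfl, iteratedDeriv_succ, iteratedDeriv_succ,
    iteratedDeriv_zero, h1, h2]

lemma quartic_convexOn (b c d : ℝ) (hc : 0 ≤ c) (hd : 0 ≤ d) :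
    ConvexOn ℝ (Set.Icc (-1 : ℝ) 1) (fun α : ℝ => 2 * b + 12 * c * α ^ 2 + 30 * d * α ^ 4) := by
  have h2 : ConvexOn ℝ Set.univ (fun α : ℝ => α ^ 2) :=
    Even.convexOn_pow (by decide)
  have h4 : ConvexOn ℝ Set.univ (fun α : ℝ => α ^ 4) :=
    Even.convexOn_pow (by decide)
  have h : ConvexOn ℝ (Set.Icc (-1 : ℝ) 1)
      (((12 * c) • (fun α : ℝ => α ^ 2) + (30 * d) • (fun α : ℝ => α ^ 4))
        + (fun _ : ℝ => 2 * b)) := (((h2.smul (by positivity : (0:ℝ) ≤ 12 * c)).add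
      (h4.smul (by positivity : (0:ℝ) ≤ 30 * d))).add
        (convexOn_const (2 * b) convex_univ)).subset
          (Set.subset_univ _) (convex_Icc _ _)
  have heq : (fun α : ℝ => 2 * b + 12 * c * α ^ 2 + 30 * d * α ^ 4)
      = ((12 * c) • (fun α : ℝ => α ^ 2) + (30 * d) • (fun α : ℝ => α ^ 4))
        + (fun _ : ℝ => 2 * b) := by
    funext α
    simp only [Pi.add_apply, Pi.smul_apply, smul_eq_mul]
    ring
  rw [heq]
  exact h

lemma c4_nonneg (ω₁ ω₂ ω₃ β : ℝ) (h₁l : 2 ≤ ω₁) (h₁u : ω₁ ≤ 4)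
    (h₂l : 2 ≤ ω₂) (h₃l : 2 ≤ ω₃) (h₃u : ω₃ ≤ 4) :
    0 ≤ 9/2*ω₃ + 3/4*ω₂*ω₃*β^2 + 9/2*ω₁*β^2 - 3/8*ω₁*ω₃^2*β^2
      + 3/4*ω₁*ω₂ - 3/8*ω₁^2*ω₃ := by
  have hG1 : 0 ≤ 12*ω₃ + 2*ω₁*ω₂ - ω₁^2*ω₃ := by
    nlinarith [mul_nonneg (mul_nonneg (by linarith : (0:ℝ) ≤ 4 - ω₁)
        (by linarith : (0:ℝ) ≤ ω₁ - 2)) (by linarith : (0:ℝ) ≤ ω₃),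
      mul_nonneg (by linarith : (0:ℝ) ≤ ω₂ - 2) (by linarith : (0:ℝ) ≤ ω₁),
      mul_nonneg (by linarith : (0:ℝ) ≤ 4 - ω₃) (by linarith : (0:ℝ) ≤ 4 - ω₁),
      mul_nonneg (by linarith : (0:ℝ) ≤ 4 - ω₃) (by linarith : (0:ℝ) ≤ ω₁ - 2),
      mul_nonneg (by linarith : (0:ℝ) ≤ ω₃ - 2) (by linarith : (0:ℝ) ≤ 4 - ω₁)]
  have hG2 : 0 ≤ 2*ω₂*ω₃ + 12*ω₁ - ω₁*ω₃^2 := by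
    nlinarith [mul_nonneg (mul_nonneg (by linarith : (0:ℝ) ≤ 4 - ω₃)
        (by linarith : (0:ℝ) ≤ ω₃ - 2)) (by linarith : (0:ℝ) ≤ ω₁),
      mul_nonneg (by linarith : (0:ℝ) ≤ ω₂ - 2) (by linarith : (0:ℝ) ≤ ω₃),
      mul_nonneg (by linarith : (0:ℝ) ≤ 4 - ω₁) (by linarith : (0:ℝ) ≤ 4 - ω₃),
      mul_nonneg (by linarith : (0:ℝ) ≤ 4 - ω₁) (by linarith : (0:ℝ) ≤ ω₃ - 2),
      mul_nonneg (by linarith : (0:ℝ) ≤ ω₁ - 2) (by linarith : (0:ℝ) ≤ 4 - ω₃)]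
  nlinarith [mul_nonneg (sq_nonneg β) hG2, hG1]

lemma quartic_min (b c d α : ℝ) (hc : 0 ≤ c) (hd : 0 ≤ d) :
    2 * b + 12 * c * (0:ℝ) ^ 2 + 30 * d * (0:ℝ) ^ 4
      ≤ 2 * b + 12 * c * α ^ 2 + 30 * d * α ^ 4 := by
  have h2 : (0:ℝ) ≤ 12 * c * α ^ 2 := by positivity
  have h4 : (0:ℝ) ≤ 30 * d * α ^ 4 := by positivity
  norm_num
  linarith

/-- For fixed `ω₁, ω₂, ω₃ ∈ [2, 4]` and `β ∈ [−1, 1]`, the second derivative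
in `α` of `det M(ω, α, β)` is convex in `α` on `[−1, 1]` and is minimized at `α = 0`:
`h(α) ≥ h(0)` for all `α ∈ [−1, 1]`. -/
theorem second_deriv_det_M_convex_min_at_zero (ω₁ ω₂ ω₃ β : ℝ)
    (h₁ : ω₁ ∈ Set.Icc (2 : ℝ) 4) (h₂ : ω₂ ∈ Set.Icc (2 : ℝ) 4)
    (h₃ : ω₃ ∈ Set.Icc (2 : ℝ) 4) (hβ : β ∈ Set.Icc (-1 : ℝ) 1) :
    ConvexOn ℝ (Set.Icc (-1 : ℝ) 1)
      (iteratedDeriv 2 (fun α : ℝ => (Mmat ω₁ ω₂ ω₃ α β).det)) ∧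
    ∀ α ∈ Set.Icc (-1 : ℝ) 1,
      iteratedDeriv 2 (fun α : ℝ => (Mmat ω₁ ω₂ ω₃ α β).det) 0
        ≤ iteratedDeriv 2 (fun α : ℝ => (Mmat ω₁ ω₂ ω₃ α β).det) α := by
  obtain ⟨h₁l, h₁u⟩ := h₁
  obtain ⟨h₂l, h₂u⟩ := h₂
  obtain ⟨h₃l, h₃u⟩ := h₃
  have hfeq : (fun α : ℝ => (Mmat ω₁ ω₂ ω₃ α β).det)
      = fun x : ℝ =>
        (9/2*ω₃*β^4 + 3/4*ω₂*ω₃*β^2 + 3/4*ω₂*ω₃*β^6 - 3/8*ω₂^2*ω₃*β^4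
          + 9/2*ω₁*β^2 + 3/4*ω₁*ω₂ + 3/4*ω₁*ω₂*β^4 - 3/8*ω₁*ω₂^2*β^2)
        + (27*β^2 - 9/4*ω₃^2*β^2 + 9/2*ω₂ + 9/2*ω₂*β^4 - 3/8*ω₂*ω₃^2*β^4
          - 9/4*ω₂^2*β^2 + 3/4*ω₁*ω₃ + 3/4*ω₁*ω₃*β^4 + 9/4*ω₁*ω₂*ω₃*β^2
          - 9/4*ω₁^2*β^2 - 3/8*ω₁^2*ω₂) * x ^ 2
        + (9/2*ω₃ + 3/4*ω₂*ω₃*β^2 + 9/2*ω₁*β^2 - 3/8*ω₁*ω₃^2*β^2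
          + 3/4*ω₁*ω₂ - 3/8*ω₁^2*ω₃) * x ^ 4
        + (3/4*ω₁*ω₃) * x ^ 6 := by
    funext α
    simp [Mmat, Matrix.det_fin_three]
    ring
  have hc0 := c4_nonneg ω₁ ω₂ ω₃ β h₁l h₁u h₂l h₃l h₃u
  have hd0 : (0:ℝ) ≤ 3/4*ω₁*ω₃ := by nlinarith
  rw [hfeq, iteratedDeriv_two_poly6]
  exact ⟨quartic_convexOn _ _ _ hc0 hd0, fun α _ => quartic_min _ _ _ α hc0 hd0⟩
end

section
/- If ω₁, ω₂, ω₃ ∈ [2, 4] and α, β ∈ [−1, 1], then ∂²/∂α² det M(ω, α, β) ≥ 0, i.e., the second derivative in α of the determinant of M(ω, α, β) is nonnegative. -/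
open Matrix

private lemma deriv_poly6 (a b c d : ℝ) :
    deriv (fun x : ℝ => a + b * x ^ 2 + c * x ^ 4 + d * x ^ 6) =
      fun x => 2 * b * x + 4 * c * x ^ 3 + 6 * d * x ^ 5 := by
  funext x
  have h : HasDerivAt (fun x : ℝ => a + b * x ^ 2 + c * x ^ 4 + d * x ^ 6)
      (2 * b * x + 4 * c * x ^ 3 + 6 * d * x ^ 5) x := by
    have h2 := (hasDerivAt_pow 2 x).const_mul b
    have h4 := (hasDerivAt_pow 4 x).const_mul c
    have h6 := (hasDerivAt_pow 6 x).const_mul d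
    have h0 := ((hasDerivAt_const x a).add h2).add h4 |>.add h6
    refine h0.congr_deriv ?_
    push_cast; ring
  exact h.deriv

private lemma deriv_poly5 (b c d : ℝ) :
    deriv (fun x : ℝ => 2 * b * x + 4 * c * x ^ 3 + 6 * d * x ^ 5) =
      fun x => 2 * b + 12 * c * x ^ 2 + 30 * d * x ^ 4 := by
  funext x
  have h : HasDerivAt (fun x : ℝ => 2 * b * x + 4 * c * x ^ 3 + 6 * d * x ^ 5)
      (2 * b + 12 * c * x ^ 2 + 30 * d * x ^ 4) x := by
    have h1 := (hasDerivAt_id' (𝕜 := ℝ) (x := x)).const_mul (2 * b)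
    have h3 := (hasDerivAt_pow 3 x).const_mul (4 * c)
    have h5 := (hasDerivAt_pow 5 x).const_mul (6 * d)
    have h0 := (h1.add h3).add h5
    refine h0.congr_deriv ?_
    push_cast; ring
  exact h.deriv

/-- `12ω₂ + 2ω₁ω₃ - ω₁²ω₂ ≥ 0` on the box. -/
private lemma aux_A (ω₁ ω₂ ω₃ : ℝ) (hw1l : 2 ≤ ω₁) (hw1u : ω₁ ≤ 4) (hw2l : 2 ≤ ω₂)
    (hw2u : ω₂ ≤ 4) (hw3l : 2 ≤ ω₃) :
    0 ≤ 12 * ω₂ + 2 * ω₁ * ω₃ - ω₁ ^ 2 * ω₂ := by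
  nlinarith [mul_nonneg (by linarith : (0:ℝ) ≤ ω₁) (sub_nonneg.2 hw3l),
    mul_nonneg (mul_nonneg (sub_nonneg.2 hw1u) (by linarith : (0:ℝ) ≤ 4 + ω₁)) (sub_nonneg.2 hw2l),
    mul_nonneg (sub_nonneg.2 hw1u) (by linarith : (0:ℝ) ≤ ω₁ + 2), sub_nonneg.2 hw2u]

/-- `12 + ω₁ω₂ω₃ - ω₁² - ω₂² - ω₃² ≥ 0` on the box. -/
private lemma aux_B (ω₁ ω₂ ω₃ : ℝ) (hw1l : 2 ≤ ω₁) (hw1u : ω₁ ≤ 4) (hw2l : 2 ≤ ω₂)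
    (hw2u : ω₂ ≤ 4) (hw3l : 2 ≤ ω₃) (hw3u : ω₃ ≤ 4) :
    0 ≤ 12 + ω₁ * ω₂ * ω₃ - ω₁ ^ 2 - ω₂ ^ 2 - ω₃ ^ 2 := by
  nlinarith [mul_nonneg (mul_nonneg (by linarith : (0:ℝ) ≤ ω₁) (sub_nonneg.2 hw2l)) (sub_nonneg.2 hw3l),
    sq_nonneg (ω₁ - 2),
    mul_nonneg (by linarith : (0:ℝ) ≤ 2 + ω₁ - ω₂) (by linarith : (0:ℝ) ≤ 2 + ω₂ - ω₁),
    mul_nonneg (by linarith : (0:ℝ) ≤ 2 + ω₁ - ω₃) (by linarith : (0:ℝ) ≤ 2 + ω₃ - ω₁)]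

set_option maxHeartbeats 1000000 in
/-- For `ω₁, ω₂, ω₃ ∈ [2, 4]` and `α, β ∈ [−1, 1]`, the second derivative in
`α` of `det M(ω, α, β)` is nonnegative. -/
theorem second_deriv_det_M_nonneg (ω₁ ω₂ ω₃ α β : ℝ)
    (h₁ : ω₁ ∈ Set.Icc (2 : ℝ) 4) (h₂ : ω₂ ∈ Set.Icc (2 : ℝ) 4)
    (h₃ : ω₃ ∈ Set.Icc (2 : ℝ) 4)
    (hα : α ∈ Set.Icc (-1 : ℝ) 1) (hβ : β ∈ Set.Icc (-1 : ℝ) 1) :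
    0 ≤ iteratedDeriv 2 (fun α : ℝ => (Mmat ω₁ ω₂ ω₃ α β).det) α := by
  obtain ⟨hw1l, hw1u⟩ := h₁
  obtain ⟨hw2l, hw2u⟩ := h₂
  obtain ⟨hw3l, hw3u⟩ := h₃
  obtain ⟨hal, hau⟩ := hα
  obtain ⟨hbl, hbu⟩ := hβ
  have key : (fun α : ℝ => (Mmat ω₁ ω₂ ω₃ α β).det) =
      fun x : ℝ => (9/2 * ω₃ * β^4 + 3/4 * ω₂ * ω₃ * β^2 + 3/4 * ω₂ * ω₃ * β^6 - 3/8 * ω₂^2 * ω₃ * β^4 + 9/2 * ω₁ * β^2 + 3/4 * ω₁ * ω₂ + 3/4 * ω₁ * ω₂ * β^4 - 3/8 * ω₁ * ω₂^2 * β^2) + (27 * β^2 - 9/4 * ω₃^2 * β^2 + 9/2 * ω₂ + 9/2 * ω₂ * β^4 - 3/8 * ω₂ * ω₃^2 * β^4 - 9/4 * ω₂^2 * β^2 + 3/4 * ω₁ * ω₃ + 3/4 * ω₁ * ω₃ * β^4 + 9/4 * ω₁ * ω₂ * ω₃ * β^2 - 9/4 * ω₁^2 * β^2 - 3/8 * ω₁^2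 * ω₂) * x ^ 2 + (9/2 * ω₃ + 3/4 * ω₂ * ω₃ * β^2 + 9/2 * ω₁ * β^2 - 3/8 * ω₁ * ω₃^2 * β^2 + 3/4 * ω₁ * ω₂ - 3/8 * ω₁^2 * ω₃) * x ^ 4 + (3/4 * ω₁ * ω₃) * x ^ 6 := by
    funext x
    rw [Mmat, Matrix.det_fin_three]
    norm_num [Matrix.cons_val_zero, Matrix.cons_val_one, Matrix.cons_val_two]
    ring
  rw [key, iteratedDeriv_succ, iteratedDeriv_one, deriv_poly6, deriv_poly5]
  simp only
  have hv : (0:ℝ) ≤ β ^ 2 := sq_nonneg β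
  have hv1 : β ^ 2 ≤ 1 := by nlinarith
  have hu : (0:ℝ) ≤ α ^ 2 := sq_nonneg α
  -- the coefficient of x^4 is nonnegative
  have h4 : (0:ℝ) ≤ 12 * (9/2 * ω₃ + 3/4 * ω₂ * ω₃ * β^2 + 9/2 * ω₁ * β^2 - 3/8 * ω₁ * ω₃^2 * β^2 + 3/4 * ω₁ * ω₂ - 3/8 * ω₁^2 * ω₃) := by
    nlinarith [mul_nonneg (sub_nonneg.2 hw1u) (sub_nonneg.2 hw3l),
      mul_nonneg (sub_nonneg.2 hw1u) (sub_nonneg.2 hw3u),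
      mul_nonneg (sub_nonneg.2 hw3u) hv, mul_nonneg (sub_nonneg.2 hw3l) hv,
      mul_nonneg (sub_nonneg.2 hw1u) hv,
      mul_nonneg (mul_nonneg (sub_nonneg.2 hw1u) (sub_nonneg.2 hw3u)) hv,
      mul_nonneg (mul_nonneg (sub_nonneg.2 hw1u) (sub_nonneg.2 hw3l)) hv,
      mul_nonneg (mul_nonneg (sub_nonneg.2 hw2l) (sub_nonneg.2 hw3l)) hv,
      mul_nonneg (sub_nonneg.2 hw1l) (sub_nonneg.2 hw2l), sub_nonneg.2 hv1,
      mul_nonneg (sub_nonneg.2 hw1u) (sub_nonneg.2 hv1)]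
  -- the constant coefficient is nonnegative
  have h2 : (0:ℝ) ≤ 2 * (27 * β^2 - 9/4 * ω₃^2 * β^2 + 9/2 * ω₂ + 9/2 * ω₂ * β^4 - 3/8 * ω₂ * ω₃^2 * β^4 - 9/4 * ω₂^2 * β^2 + 3/4 * ω₁ * ω₃ + 3/4 * ω₁ * ω₃ * β^4 + 9/4 * ω₁ * ω₂ * ω₃ * β^2 - 9/4 * ω₁^2 * β^2 - 3/8 * ω₁^2 * ω₂) := by
    have hA := aux_A ω₁ ω₂ ω₃ hw1l hw1u hw2l hw2u hw3l
    have hB := aux_B ω₁ ω₂ ω₃ hw1l hw1u hw2l hw2u hw3l hw3u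
    have hC := aux_A ω₃ ω₂ ω₁ hw3l hw3u hw2l hw2u hw1l
    nlinarith [mul_nonneg hB hv, mul_nonneg hC (mul_nonneg hv hv)]
  -- the coefficient of x^6 is nonnegative
  have h6 : (0:ℝ) ≤ 30 * (3/4 * ω₁ * ω₃) := by nlinarith
  nlinarith [mul_nonneg h4 hu, mul_nonneg h6 (mul_nonneg hu hu)]
end

section
/- If ω₁, ω₂, ω₃ ∈ [2, 4], then for all α, β ∈ [−1, 1] the 3×3 symmetric matrix M(ω, α, β) is positive semidefinite. -/
open Matrix

/-- For `ω₁, ω₂, ω₃ ∈ [2, 4]` and `α, β ∈ [−1, 1]`, the `3 × 3` symmetric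
matrix `M(ω, α, β)` is positive semidefinite. -/
theorem M_posSemidef (ω₁ ω₂ ω₃ α β : ℝ)
    (h₁ : ω₁ ∈ Set.Icc (2 : ℝ) 4) (h₂ : ω₂ ∈ Set.Icc (2 : ℝ) 4)
    (h₃ : ω₃ ∈ Set.Icc (2 : ℝ) 4)
    (hα : α ∈ Set.Icc (-1 : ℝ) 1) (hβ : β ∈ Set.Icc (-1 : ℝ) 1) :
    (!![3 + 1 / 2 * ω₁ * α ^ 2 + 1 / 2 * ω₂ * β ^ 2, ω₁ * α, ω₂ * β;
        ω₁ * α, 1 / 2 * ω₁ + 3 * α ^ 2 + 1 / 2 * ω₃ * β ^ 2, ω₃ * α * β;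
        ω₂ * β, ω₃ * α * β,
          1 / 2 * ω₂ + 1 / 2 * ω₃ * α ^ 2 + 3 * β ^ 2]).PosSemidef := by
  obtain ⟨h1l, h1u⟩ := h₁
  obtain ⟨h2l, h2u⟩ := h₂
  obtain ⟨h3l, h3u⟩ := h₃
  rw [Matrix.posSemidef_iff_dotProduct_mulVec]
  constructor
  · ext i j
    fin_cases i <;> fin_cases j <;>
      simp [Matrix.conjTranspose_apply]
  · intro v
    have hv : ∀ i, (star v) i = v i := fun i => rfl
    simp [dotProduct, Matrix.mulVec, Fin.sum_univ_three, hv]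
    set x := v 0
    set y := v 1
    set z := v 2
    nlinarith [sq_nonneg (α * x + y), sq_nonneg (β * x + z), sq_nonneg (β * y + α * z),
      sq_nonneg (x + α * y + β * z),
      mul_nonneg (by linarith : (0:ℝ) ≤ ω₁ - 2) (sq_nonneg (α * x + y)),
      mul_nonneg (by linarith : (0:ℝ) ≤ ω₂ - 2) (sq_nonneg (β * x + z)),
      mul_nonneg (by linarith : (0:ℝ) ≤ ω₃ - 2) (sq_nonneg (β * y + α * z)),
      mul_nonneg (by linarith : (0:ℝ) ≤ ω₁ - 2) (sq_nonneg (x + α * y)),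
      mul_nonneg (by linarith : (0:ℝ) ≤ ω₂ - 2) (sq_nonneg (x + β * z)),
      mul_nonneg (by linarith : (0:ℝ) ≤ ω₃ - 2) (sq_nonneg (α * y + β * z)),
      mul_nonneg (by linarith : (0:ℝ) ≤ 8 - ω₁ - ω₂) (sq_nonneg x),
      mul_nonneg (by linarith : (0:ℝ) ≤ 8 - ω₁ - ω₃) (sq_nonneg (α * y)),
      mul_nonneg (by linarith : (0:ℝ) ≤ 8 - ω₂ - ω₃) (sq_nonneg (β * z))]
end

section
/- Let A be a 3×3 real symmetric positive definite matrix. If the condition number κ(A) is at most 2 + √3, then the Kantorovich function K(x) = (xᵀAx)(xᵀA⁻¹x) is convex on ℝ³. -/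
open Matrix

private theorem lemR18 (u1 u2 u3 : ℝ) (p1 : 0 < u1) (p2 : 0 < u2) (p3 : 0 < u3)
    (h13 : u1 ≤ 14*u3) (h31 : u3 ≤ 14*u1) (h23 : u2 ≤ 14*u3) (h32 : u3 ≤ 14*u2) :
    u2*(u1+u3)^2 + u1*(u2+u3)^2 ≤ 36*u1*u2*u3 := by
  nlinarith [mul_nonneg p2.le (mul_nonneg (sub_nonneg.2 h13) (sub_nonneg.2 h31)),
    mul_nonneg p1.le (mul_nonneg (sub_nonneg.2 h23) (sub_nonneg.2 h32)),
    mul_pos (mul_pos p1 p2) p3]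

private theorem lemCore18 (l1 l2 l3 a1 a2 a3 : ℝ) (p1 : 0 < l1) (p2 : 0 < l2) (p3 : 0 < l3)
    (h13 : l1^2 ≤ 14*l3^2) (h31 : l3^2 ≤ 14*l1^2) (h23 : l2^2 ≤ 14*l3^2) (h32 : l3^2 ≤ 14*l2^2) :
    0 ≤ 6*l1*l2*l3*(a1^2+a2^2+a3^2) + 2*(l1^2+l3^2)*l2*(a1*a3) + 2*(l2^2+l3^2)*l1*(a2*a3) := by
  have hR := lemR18 (l1^2) (l2^2) (l3^2) (by positivity) (by positivity) (by positivity) h13 h31 h23 h32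
  have key : 0 ≤ (6*l1*l2*l3) * (6*l1*l2*l3*(a1^2+a2^2+a3^2) + 2*(l1^2+l3^2)*l2*(a1*a3) + 2*(l2^2+l3^2)*l1*(a2*a3)) := by
    nlinarith [mul_nonneg (sq_nonneg l2) (sq_nonneg (6*l1*l3*a1 + (l1^2+l3^2)*a3)),
      mul_nonneg (sq_nonneg l1) (sq_nonneg (6*l2*l3*a2 + (l2^2+l3^2)*a3)),
      mul_nonneg (sq_nonneg a3) (sub_nonneg.2 hR)]
  have hpos : 0 < 6*l1*l2*l3 := by positivity
  exact nonneg_of_mul_nonneg_right key hpos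

set_option maxHeartbeats 1000000 in
private theorem lemMain18 (l1 l2 l3 a1 a2 a3 B12 B13 B23 : ℝ)
    (p1 : 0 < l1) (p2 : 0 < l2) (p3 : 0 < l3)
    (h12 : l1^2 ≤ 14*l2^2) (h21 : l2^2 ≤ 14*l1^2)
    (h13 : l1^2 ≤ 14*l3^2) (h31 : l3^2 ≤ 14*l1^2)
    (h23 : l2^2 ≤ 14*l3^2) (h32 : l3^2 ≤ 14*l2^2)
    (hB12 : 2*(a1*a2) ≤ B12) (hB13 : 2*(a1*a3) ≤ B13) (hB23 : 2*(a2*a3) ≤ B23) :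
    0 ≤ 6*l1*l2*l3*(a1^2+a2^2+a3^2) + (l1^2+l2^2)*l3*B12 + (l1^2+l3^2)*l2*B13
      + (l2^2+l3^2)*l1*B23 := by
  have c12 : (0:ℝ) ≤ (l1^2+l2^2)*l3 := by positivity
  have c13 : (0:ℝ) ≤ (l1^2+l3^2)*l2 := by positivity
  have c23 : (0:ℝ) ≤ (l2^2+l3^2)*l1 := by positivity
  have m12 := mul_le_mul_of_nonneg_left hB12 c12
  have m13 := mul_le_mul_of_nonneg_left hB13 c13
  have m23 := mul_le_mul_of_nonneg_left hB23 c23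
  rcases le_total 0 a1 with s1 | s1 <;> rcases le_total 0 a2 with s2 | s2 <;>
    rcases le_total 0 a3 with s3 | s3
  · nlinarith [m12, m13, m23, mul_nonneg c12 (mul_nonneg s1 s2),
      mul_nonneg c13 (mul_nonneg s1 s3), mul_nonneg c23 (mul_nonneg s2 s3),
      mul_pos (mul_pos p1 p2) p3, sq_nonneg a1, sq_nonneg a2, sq_nonneg a3]
  · nlinarith [m12, m13, m23, lemCore18 l1 l2 l3 a1 a2 a3 p1 p2 p3 h13 h31 h23 h32,
      mul_nonneg c12 (mul_nonneg s1 s2)]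
  · nlinarith [m12, m13, m23, lemCore18 l1 l3 l2 a1 a3 a2 p1 p3 p2 h12 h21 h32 h23,
      mul_nonneg c13 (mul_nonneg s1 s3)]
  · nlinarith [m12, m13, m23,
      lemCore18 l2 l3 l1 (-a2) (-a3) (-a1) p2 p3 p1 h21 h12 h31 h13,
      mul_nonneg c23 (mul_nonneg (neg_nonneg.2 s2) (neg_nonneg.2 s3))]
  · nlinarith [m12, m13, m23, lemCore18 l2 l3 l1 a2 a3 a1 p2 p3 p1 h21 h12 h31 h13,
      mul_nonneg c23 (mul_nonneg s2 s3)]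
  · nlinarith [m12, m13, m23,
      lemCore18 l1 l3 l2 (-a1) (-a3) (-a2) p1 p3 p2 h12 h21 h32 h23,
      mul_nonneg c13 (mul_nonneg (neg_nonneg.2 s1) (neg_nonneg.2 s3))]
  · nlinarith [m12, m13, m23,
      lemCore18 l1 l2 l3 (-a1) (-a2) (-a3) p1 p2 p3 h13 h31 h23 h32,
      mul_nonneg c12 (mul_nonneg (neg_nonneg.2 s1) (neg_nonneg.2 s2))]
  · nlinarith [m12, m13, m23, mul_nonneg c12 (mul_nonneg (neg_nonneg.2 s1) (neg_nonneg.2 s2)),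
      mul_nonneg c13 (mul_nonneg (neg_nonneg.2 s1) (neg_nonneg.2 s3)),
      mul_nonneg c23 (mul_nonneg (neg_nonneg.2 s2) (neg_nonneg.2 s3)),
      mul_pos (mul_pos p1 p2) p3, sq_nonneg a1, sq_nonneg a2, sq_nonneg a3]

private theorem lemH18 (l1 l2 l3 c1 c2 c3 d1 d2 d3 : ℝ)
    (p1 : 0 < l1) (p2 : 0 < l2) (p3 : 0 < l3)
    (h12 : l1^2 ≤ 14*l2^2) (h21 : l2^2 ≤ 14*l1^2)
    (h13 : l1^2 ≤ 14*l3^2) (h31 : l3^2 ≤ 14*l1^2)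
    (h23 : l2^2 ≤ 14*l3^2) (h32 : l3^2 ≤ 14*l2^2) :
    0 ≤ (l1*(d1*d1)+l2*(d2*d2)+l3*(d3*d3)) * (l1⁻¹*(c1*c1)+l2⁻¹*(c2*c2)+l3⁻¹*(c3*c3))
      + (l1⁻¹*(d1*d1)+l2⁻¹*(d2*d2)+l3⁻¹*(d3*d3)) * (l1*(c1*c1)+l2*(c2*c2)+l3*(c3*c3))
      + 4*((l1*(d1*c1)+l2*(d2*c2)+l3*(d3*c3)) * (l1⁻¹*(d1*c1)+l2⁻¹*(d2*c2)+l3⁻¹*(d3*c3))) := by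
  have key := lemMain18 l1 l2 l3 (c1*d1) (c2*d2) (c3*d3)
      ((c1*d2)^2+(c2*d1)^2+4*(c1*d1*(c2*d2)))
      ((c1*d3)^2+(c3*d1)^2+4*(c1*d1*(c3*d3)))
      ((c2*d3)^2+(c3*d2)^2+4*(c2*d2*(c3*d3)))
      p1 p2 p3 h12 h21 h13 h31 h23 h32
      (by nlinarith [sq_nonneg (c1*d2+c2*d1)]) (by nlinarith [sq_nonneg (c1*d3+c3*d1)])
      (by nlinarith [sq_nonneg (c2*d3+c3*d2)])
  have hpos : (0:ℝ) < l1*l2*l3 := by positivity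
  have hexp : (l1*l2*l3) * ((l1*(d1*d1)+l2*(d2*d2)+l3*(d3*d3)) * (l1⁻¹*(c1*c1)+l2⁻¹*(c2*c2)+l3⁻¹*(c3*c3))
      + (l1⁻¹*(d1*d1)+l2⁻¹*(d2*d2)+l3⁻¹*(d3*d3)) * (l1*(c1*c1)+l2*(c2*c2)+l3*(c3*c3))
      + 4*((l1*(d1*c1)+l2*(d2*c2)+l3*(d3*c3)) * (l1⁻¹*(d1*c1)+l2⁻¹*(d2*c2)+l3⁻¹*(d3*c3))))
      = 6*l1*l2*l3*((c1*d1)^2+(c2*d2)^2+(c3*d3)^2)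
        + (l1^2+l2^2)*l3*((c1*d2)^2+(c2*d1)^2+4*(c1*d1*(c2*d2)))
        + (l1^2+l3^2)*l2*((c1*d3)^2+(c3*d1)^2+4*(c1*d1*(c3*d3)))
        + (l2^2+l3^2)*l1*((c2*d3)^2+(c3*d2)^2+4*(c2*d2*(c3*d3))) := by
    field_simp
    ring
  have key2 : 0 ≤ (l1*l2*l3) * _ := hexp ▸ key
  exact nonneg_of_mul_nonneg_right key2 hpos

private theorem quadform_key18 (A : Matrix (Fin 3) (Fin 3) ℝ) (hA : A.PosDef)
    (hrat : ∀ i j, (hA.1.eigenvalues i)^2 ≤ 14*(hA.1.eigenvalues j)^2)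
    (y w : Fin 3 → ℝ) :
    0 ≤ (w ⬝ᵥ (A *ᵥ w)) * (y ⬝ᵥ (A⁻¹ *ᵥ y)) + (w ⬝ᵥ (A⁻¹ *ᵥ w)) * (y ⬝ᵥ (A *ᵥ y))
      + 4*((w ⬝ᵥ (A *ᵥ y)) * (w ⬝ᵥ (A⁻¹ *ᵥ y))) := by
  classical
  set lam := hA.1.eigenvalues with hlam
  set U : Matrix (Fin 3) (Fin 3) ℝ := (hA.1.eigenvectorUnitary : Matrix (Fin 3) (Fin 3) ℝ) with hU
  have hUU : star U * U = 1 := mem_unitaryGroup_iff'.mp (hA.1.eigenvectorUnitary).2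
  have hU'U : U * star U = 1 := mem_unitaryGroup_iff.mp (hA.1.eigenvectorUnitary).2
  have hspec : A = U * diagonal lam * star U := by
    have := hA.1.spectral_theorem
    simpa [RCLike.ofReal_real_eq_id] using this
  have hlampos : ∀ i, 0 < lam i := fun i => hA.eigenvalues_pos i
  have hprod : ∀ (B C : Matrix (Fin 3) (Fin 3) ℝ),
      (U * B * star U) * (U * C * star U) = U * (B * C) * star U := by
    intro B C
    simp only [Matrix.mul_assoc]
    rw [← Matrix.mul_assoc (star U) U, hUU, Matrix.one_mul]
  have hAinv : A⁻¹ = U * diagonal (fun i => (lam i)⁻¹) * star U := by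
    apply inv_eq_right_inv
    rw [hspec, hprod, diagonal_mul_diagonal]
    rw [show (fun i => lam i * (lam i)⁻¹) = fun _ => (1:ℝ) from
      funext fun i => mul_inv_cancel₀ (hlampos i).ne', diagonal_one, Matrix.mul_one, hU'U]
  have hform : ∀ (f : Fin 3 → ℝ) (a b : Fin 3 → ℝ),
      a ⬝ᵥ ((U * diagonal f * star U) *ᵥ b)
        = f 0 * ((star U *ᵥ a) 0 * (star U *ᵥ b) 0)
          + f 1 * ((star U *ᵥ a) 1 * (star U *ᵥ b) 1)
          + f 2 * ((star U *ᵥ a) 2 * (star U *ᵥ b) 2) := by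
    intro f a b
    rw [← Matrix.mulVec_mulVec, ← Matrix.mulVec_mulVec]
    rw [Matrix.dotProduct_mulVec a U]
    have hstar : star U = Uᵀ := by
      rw [Matrix.star_eq_conjTranspose, Matrix.conjTranspose_eq_transpose_of_trivial]
    have hvm : a ᵥ* U = star U *ᵥ a := by rw [hstar, Matrix.mulVec_transpose]
    rw [hvm]
    simp [dotProduct, Matrix.mulVec_diagonal, Fin.sum_univ_three]
    ring
  rw [hAinv, hspec]
  simp only [hform]
  exact lemH18 (lam 0) (lam 1) (lam 2)
    ((star U *ᵥ y) 0) ((star U *ᵥ y) 1) ((star U *ᵥ y) 2)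
    ((star U *ᵥ w) 0) ((star U *ᵥ w) 1) ((star U *ᵥ w) 2)
    (hlampos 0) (hlampos 1) (hlampos 2)
    (hrat 0 1) (hrat 1 0) (hrat 0 2) (hrat 2 0) (hrat 1 2) (hrat 2 1)

private theorem quartic_convex18 (c0 c1 c2 c3 c4 : ℝ)
    (h : ∀ t : ℝ, 0 ≤ 2*c2 + 6*c3*t + 12*c4*t^2) :
    ConvexOn ℝ Set.univ (fun t : ℝ => c0 + c1*t + c2*t^2 + c3*t^3 + c4*t^4) := by
  have hd1 : ∀ t : ℝ, HasDerivAt (fun t : ℝ => c0 + c1*t + c2*t^2 + c3*t^3 + c4*t^4)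
      (c1 + 2*c2*t + 3*c3*t^2 + 4*c4*t^3) t := by
    intro t
    have h0 : HasDerivAt (fun _ : ℝ => c0) 0 t := hasDerivAt_const t c0
    have h1 : HasDerivAt (fun t : ℝ => c1*t) c1 t := by
      simpa using (hasDerivAt_id t).const_mul c1
    have h2 : HasDerivAt (fun t : ℝ => c2*t^2) (c2*(2*t^1)) t := by
      simpa using (hasDerivAt_pow 2 t).const_mul c2
    have h3 : HasDerivAt (fun t : ℝ => c3*t^3) (c3*(3*t^2)) t := by
      simpa using (hasDerivAt_pow 3 t).const_mul c3
    have h4 : HasDerivAt (fun t : ℝ => c4*t^4) (c4*(4*t^3)) t := by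
      simpa using (hasDerivAt_pow 4 t).const_mul c4
    have := (((h0.add h1).add h2).add h3).add h4
    exact this.congr_deriv (by ring)
  have hd2 : ∀ t : ℝ, HasDerivAt (fun t : ℝ => c1 + 2*c2*t + 3*c3*t^2 + 4*c4*t^3)
      (2*c2 + 6*c3*t + 12*c4*t^2) t := by
    intro t
    have h0 : HasDerivAt (fun _ : ℝ => c1) 0 t := hasDerivAt_const t c1
    have h1 : HasDerivAt (fun t : ℝ => 2*c2*t) (2*c2) t := by
      simpa using (hasDerivAt_id t).const_mul (2*c2)
    have h2 : HasDerivAt (fun t : ℝ => 3*c3*t^2) ((3*c3)*(2*t^1)) t := by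
      simpa using (hasDerivAt_pow 2 t).const_mul (3*c3)
    have h3 : HasDerivAt (fun t : ℝ => 4*c4*t^3) ((4*c4)*(3*t^2)) t := by
      simpa using (hasDerivAt_pow 3 t).const_mul (4*c4)
    have := ((h0.add h1).add h2).add h3
    exact this.congr_deriv (by ring)
  have hderiv : deriv (fun t : ℝ => c0 + c1*t + c2*t^2 + c3*t^3 + c4*t^4)
      = fun t : ℝ => c1 + 2*c2*t + 3*c3*t^2 + 4*c4*t^3 := funext fun t => (hd1 t).deriv
  apply convexOn_univ_of_deriv2_nonneg
  · exact fun t => (hd1 t).differentiableAt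
  · rw [hderiv]; exact fun t => (hd2 t).differentiableAt
  · intro t
    have hit : deriv^[2] (fun t : ℝ => c0 + c1*t + c2*t^2 + c3*t^3 + c4*t^4) t
        = deriv (deriv (fun t : ℝ => c0 + c1*t + c2*t^2 + c3*t^3 + c4*t^4)) t := rfl
    rw [hit, hderiv, (hd2 t).deriv]
    exact h t

/-- If `A` is a `3 × 3` real symmetric positive definite matrix whose
condition number (largest eigenvalue over smallest eigenvalue) is at most `2 + √3`, then
the Kantorovich function `K(x) = (xᵀAx)(xᵀA⁻¹x)` is convex on `ℝ³`. -/
theorem kantorovich_dim3_convex_of_condNumber_le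
    (A : Matrix (Fin 3) (Fin 3) ℝ) (hA : A.PosDef)
    (hκ : (⨆ i, hA.1.eigenvalues i) / (⨅ i, hA.1.eigenvalues i) ≤ 2 + Real.sqrt 3) :
    ConvexOn ℝ Set.univ
      (fun x : Fin 3 → ℝ => (x ⬝ᵥ (A *ᵥ x)) * (x ⬝ᵥ (A⁻¹ *ᵥ x))) := by
  classical
  have hlampos : ∀ i, 0 < hA.1.eigenvalues i := fun i => hA.eigenvalues_pos i
  -- eigenvalue ratio bounds
  have hrat : ∀ i j, (hA.1.eigenvalues i)^2 ≤ 14*(hA.1.eigenvalues j)^2 := by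
    set lam := hA.1.eigenvalues with hlamdef
    have hbddA : BddAbove (Set.range lam) := (Set.finite_range lam).bddAbove
    have hbddB : BddBelow (Set.range lam) := (Set.finite_range lam).bddBelow
    obtain ⟨i0, hi0⟩ := Finite.exists_min lam
    have hinf : (⨅ i, lam i) = lam i0 := le_antisymm (ciInf_le hbddB i0) (le_ciInf hi0)
    have hinfpos : 0 < ⨅ i, lam i := hinf ▸ hlampos i0
    have hsup : (⨆ i, lam i) ≤ (2 + Real.sqrt 3) * (⨅ i, lam i) := by
      rw [div_le_iff₀ hinfpos] at hκ
      exact hκ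
    intro i j
    have hij : lam i ≤ (2 + Real.sqrt 3) * lam j := by
      calc lam i ≤ ⨆ i, lam i := le_ciSup hbddA i
        _ ≤ (2 + Real.sqrt 3) * (⨅ i, lam i) := hsup
        _ ≤ (2 + Real.sqrt 3) * lam j := by
            apply mul_le_mul_of_nonneg_left (ciInf_le hbddB j)
            positivity
    have hs3 : Real.sqrt 3 ^ 2 = 3 := Real.sq_sqrt (by norm_num)
    have hs3' : (0:ℝ) ≤ Real.sqrt 3 := Real.sqrt_nonneg 3
    nlinarith [hlampos i, hlampos j, sq_nonneg (Real.sqrt 3 - 7/4),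
      mul_pos (hlampos i) (hlampos j), sq_nonneg (lam j)]
  -- symmetry facts
  have hAsymm : Aᵀ = A := by
    rw [← Matrix.conjTranspose_eq_transpose_of_trivial]; exact hA.1
  have hAisymm : (A⁻¹)ᵀ = A⁻¹ := by rw [Matrix.transpose_nonsing_inv, hAsymm]
  have hsymdot : ∀ (M : Matrix (Fin 3) (Fin 3) ℝ), Mᵀ = M →
      ∀ a b : Fin 3 → ℝ, b ⬝ᵥ (M *ᵥ a) = a ⬝ᵥ (M *ᵥ b) := by
    intro M hM a b
    calc b ⬝ᵥ (M *ᵥ a) = (b ᵥ* M) ⬝ᵥ a := dotProduct_mulVec _ _ _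
      _ = (Mᵀ *ᵥ b) ⬝ᵥ a := by rw [Matrix.mulVec_transpose]
      _ = (M *ᵥ b) ⬝ᵥ a := by rw [hM]
      _ = a ⬝ᵥ (M *ᵥ b) := dotProduct_comm _ _
  have hexpand : ∀ (M : Matrix (Fin 3) (Fin 3) ℝ), Mᵀ = M → ∀ (x v : Fin 3 → ℝ) (t : ℝ),
      (x + t • v) ⬝ᵥ (M *ᵥ (x + t • v))
        = x ⬝ᵥ (M *ᵥ x) + 2*(x ⬝ᵥ (M *ᵥ v))*t + (v ⬝ᵥ (M *ᵥ v))*t^2 := by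
    intro M hM x v t
    simp only [Matrix.mulVec_add, Matrix.mulVec_smul, dotProduct_add,
      add_dotProduct, dotProduct_smul, smul_dotProduct, smul_eq_mul]
    rw [hsymdot M hM x v]
    ring
  have hcross : ∀ (M : Matrix (Fin 3) (Fin 3) ℝ), Mᵀ = M → ∀ (x v : Fin 3 → ℝ) (t : ℝ),
      v ⬝ᵥ (M *ᵥ (x + t • v)) = x ⬝ᵥ (M *ᵥ v) + (v ⬝ᵥ (M *ᵥ v))*t := by
    intro M hM x v t
    simp only [Matrix.mulVec_add, Matrix.mulVec_smul, dotProduct_add,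
      dotProduct_smul, smul_eq_mul]
    rw [hsymdot M hM x v]
    ring
  -- convexity along each line
  have hline : ∀ (x v : Fin 3 → ℝ), ConvexOn ℝ Set.univ
      (fun t : ℝ => ((x + t • v) ⬝ᵥ (A *ᵥ (x + t • v))) * ((x + t • v) ⬝ᵥ (A⁻¹ *ᵥ (x + t • v)))) := by
    intro x v
    set p0 := x ⬝ᵥ (A *ᵥ x) with hp0
    set p1 := x ⬝ᵥ (A *ᵥ v) with hp1
    set p2 := v ⬝ᵥ (A *ᵥ v) with hp2
    set q0 := x ⬝ᵥ (A⁻¹ *ᵥ x) with hq0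
    set q1 := x ⬝ᵥ (A⁻¹ *ᵥ v) with hq1
    set q2 := v ⬝ᵥ (A⁻¹ *ᵥ v) with hq2
    have hfun : (fun t : ℝ => ((x + t • v) ⬝ᵥ (A *ᵥ (x + t • v))) * ((x + t • v) ⬝ᵥ (A⁻¹ *ᵥ (x + t • v))))
        = fun t : ℝ => (p0*q0) + (2*p0*q1+2*p1*q0)*t + (p0*q2+4*p1*q1+p2*q0)*t^2
          + (2*p1*q2+2*p2*q1)*t^3 + (p2*q2)*t^4 := by
      funext t
      rw [hexpand A hAsymm x v t, hexpand A⁻¹ hAisymm x v t]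
      ring
    rw [hfun]
    apply quartic_convex18
    intro t
    have hk := quadform_key18 A hA hrat (x + t • v) v
    rw [hexpand A hAsymm x v t, hexpand A⁻¹ hAisymm x v t,
      hcross A hAsymm x v t, hcross A⁻¹ hAisymm x v t] at hk
    nlinarith [hk]
  -- conclude
  refine ⟨convex_univ, ?_⟩
  intro x _ y _ a b ha hb hab
  have h2 := (hline y (x - y)).2 (Set.mem_univ (1:ℝ)) (Set.mem_univ (0:ℝ)) ha hb hab
  simp only [smul_eq_mul, mul_one, mul_zero, add_zero, one_smul, zero_smul] at h2
  have he1 : y + (x - y) = x := by abel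
  have hea : y + a • (x - y) = a • x + b • y := by
    have hb' : b = 1 - a := by linarith
    subst hb'
    funext i
    simp [Pi.add_apply, Pi.smul_apply, Pi.sub_apply, smul_eq_mul]
    ring
  rw [hea, he1] at h2
  simpa using h2
end

section
/- Fix n ≥ 2 and suppose γ* is a real constant such that for every n×n real symmetric positive definite matrix A, the Kantorovich function K(x) = (xᵀAx)(xᵀA⁻¹x) is convex on ℝⁿ if and only if κ(A) ≤ γ*. Then √(5+2√6) ≤ γ* ≤ 3 + 2√2; moreover, if n = 3, then 2 + √3 ≤ γ* ≤ 3 + 2√2. -/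
open Matrix

section KantorovichAux
open Finset

private lemma Q_nonneg (P a r σ ρ : ℝ) (hr : 0 ≤ r) (hρ : 0 ≤ ρ) (h : σ ^ 2 ≤ r * ρ) :
    0 ≤ 12*a^2*P^2 + 8*a^2*r + 8*P^2*ρ + 32*P*a*σ + 8*σ^2 + 4*r*ρ := by
  have hT : 0 ≤ a ^ 2 * r + P ^ 2 * ρ + 2 * P * a * σ := by
    nlinarith [mul_nonneg (mul_nonneg (sq_nonneg P) (sq_nonneg a)) (sub_nonneg.mpr h),
      sq_nonneg (a^2*r - P^2*ρ), mul_nonneg (sq_nonneg a) hr, mul_nonneg (sq_nonneg P) hρ]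
  nlinarith [sq_nonneg (P*a + σ), sq_nonneg (P*a), mul_nonneg hr hρ]

private lemma quartic_convexOn_s19 (c0 c1 c2 c3 c4 : ℝ)
    (h : ∀ τ : ℝ, 0 ≤ 2*c2 + 6*c3*τ + 12*c4*τ^2) :
    ConvexOn ℝ Set.univ fun τ : ℝ => c0 + c1*τ + c2*τ^2 + c3*τ^3 + c4*τ^4 := by
  have hd1 : ∀ τ : ℝ, HasDerivAt (fun τ : ℝ => c0 + c1*τ + c2*τ^2 + c3*τ^3 + c4*τ^4)
      (c1 + 2*c2*τ + 3*c3*τ^2 + 4*c4*τ^3) τ := by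
    intro τ
    have h0 := ((((hasDerivAt_const τ c0).add ((hasDerivAt_id τ).const_mul c1)).add
      ((hasDerivAt_pow 2 τ).const_mul c2)).add ((hasDerivAt_pow 3 τ).const_mul c3)).add
      ((hasDerivAt_pow 4 τ).const_mul c4)
    refine h0.congr_deriv ?_
    push_cast; ring
  have hd2 : ∀ τ : ℝ, HasDerivAt (fun τ : ℝ => c1 + 2*c2*τ + 3*c3*τ^2 + 4*c4*τ^3)
      (2*c2 + 6*c3*τ + 12*c4*τ^2) τ := by
    intro τ
    have h0 := (((hasDerivAt_const τ c1).add ((hasDerivAt_id τ).const_mul (2*c2))).add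
      ((hasDerivAt_pow 2 τ).const_mul (3*c3))).add ((hasDerivAt_pow 3 τ).const_mul (4*c4))
    refine h0.congr_deriv ?_
    push_cast; ring
  refine convexOn_of_hasDerivWithinAt2_nonneg convex_univ ?_
    (fun x _ => (hd1 x).hasDerivWithinAt) (fun x _ => (hd2 x).hasDerivWithinAt)
    (fun x _ => h x)
  fun_prop

private lemma slice_convexOn (p a r0 r1 r2 : ℝ) (h2 : 0 ≤ r2)
    (hR : ∀ τ : ℝ, 0 ≤ r0 + 2*r1*τ + r2*τ^2) (h1 : r1^2 ≤ r0*r2) :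
    ConvexOn ℝ Set.univ fun τ : ℝ =>
      (p + a*τ)^4 + 4*(p + a*τ)^2*(r0 + 2*r1*τ + r2*τ^2) + (r0 + 2*r1*τ + r2*τ^2)^2 := by
  have heq : (fun τ : ℝ => (p + a*τ)^4 + 4*(p + a*τ)^2*(r0 + 2*r1*τ + r2*τ^2)
        + (r0 + 2*r1*τ + r2*τ^2)^2)
      = fun τ : ℝ => (p^4 + 4*p^2*r0 + r0^2) + (4*p^3*a + 8*p^2*r1 + 8*p*a*r0 + 4*r0*r1)*τ
        + (6*p^2*a^2 + 4*p^2*r2 + 16*p*a*r1 + 4*a^2*r0 + 2*r0*r2 + 4*r1^2)*τ^2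
        + (4*p*a^3 + 8*p*a*r2 + 8*a^2*r1 + 4*r1*r2)*τ^3
        + (a^4 + 4*a^2*r2 + r2^2)*τ^4 := by funext τ; ring
  rw [heq]
  apply quartic_convexOn_s19
  intro τ
  have hq := Q_nonneg (p + a*τ) a (r0 + 2*r1*τ + r2*τ^2) (r1 + r2*τ) r2 (hR τ) h2
    (by nlinarith [h1])
  nlinarith [hq]

private lemma convexOn_of_slices {E : Type*} [AddCommGroup E] [Module ℝ E] {f : E → ℝ}
    (h : ∀ x v : E, ConvexOn ℝ Set.univ fun τ : ℝ => f (x + τ • v)) :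
    ConvexOn ℝ Set.univ f := by
  refine ⟨convex_univ, fun x _ y _ a b ha hb hab => ?_⟩
  have h2 := (h x (y - x)).2 (Set.mem_univ (0:ℝ)) (Set.mem_univ (1:ℝ)) ha hb hab
  simp only [smul_eq_mul, mul_zero, mul_one, zero_add, zero_smul, add_zero, one_smul] at h2
  rw [show x + (y - x) = y from by abel] at h2
  rw [show x + b • (y - x) = a • x + b • y from by
    rw [show a = 1 - b from by linarith, sub_smul, one_smul, smul_sub]; abel] at h2
  simpa [smul_eq_mul] using h2

private lemma dot_diag {n : ℕ} (e : Fin n → ℝ) (x : Fin n → ℝ) :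
    x ⬝ᵥ (Matrix.diagonal e *ᵥ x) = ∑ i, e i * (x i)^2 := by
  simp only [dotProduct, mulVec_diagonal]
  exact Finset.sum_congr rfl fun i _ => by ring

private lemma sum_split {n : ℕ} (i0 : Fin n) (e : Fin n → ℝ) (he : ∀ i, i ≠ i0 → e i = 1)
    (x : Fin n → ℝ) :
    ∑ i, e i * (x i)^2 = e i0 * (x i0)^2 + ∑ i ∈ univ.erase i0, (x i)^2 := by
  rw [← Finset.add_sum_erase _ _ (mem_univ i0)]
  congr 1
  exact Finset.sum_congr rfl fun i hi => by
    rw [he i (Finset.ne_of_mem_erase hi), one_mul]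

private lemma kantorovich_g_convex {n : ℕ} (i0 : Fin n) :
    ConvexOn ℝ Set.univ fun x : Fin n → ℝ =>
      (x i0)^4 + 4*(x i0)^2*(∑ i ∈ univ.erase i0, (x i)^2)
        + (∑ i ∈ univ.erase i0, (x i)^2)^2 := by
  apply convexOn_of_slices
  intro x v
  set p := x i0 with hp
  set a := v i0 with ha
  set r0 := ∑ i ∈ univ.erase i0, (x i)^2 with hr0
  set r1 := ∑ i ∈ univ.erase i0, (x i * v i) with hr1
  set r2 := ∑ i ∈ univ.erase i0, (v i)^2 with hr2
  have hW : ∀ τ : ℝ, (∑ i ∈ univ.erase i0, (x i + τ * v i)^2) = r0 + 2*r1*τ + r2*τ^2 := by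
    intro τ
    calc (∑ i ∈ univ.erase i0, (x i + τ * v i)^2)
        = ∑ i ∈ univ.erase i0, ((x i)^2 + ((x i * v i))*(2*τ) + (v i)^2*τ^2) :=
          Finset.sum_congr rfl fun i _ => by ring
      _ = r0 + 2*r1*τ + r2*τ^2 := by
          rw [Finset.sum_add_distrib, Finset.sum_add_distrib, ← Finset.sum_mul, ← Finset.sum_mul,
            ← hr0, ← hr1, ← hr2]
          ring
  have hfun : (fun τ : ℝ => (((x + τ • v) i0)^4 + 4*((x + τ • v) i0)^2
        *(∑ i ∈ univ.erase i0, ((x + τ • v) i)^2)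
        + (∑ i ∈ univ.erase i0, ((x + τ • v) i)^2)^2))
      = fun τ : ℝ => (p + a*τ)^4 + 4*(p + a*τ)^2*(r0 + 2*r1*τ + r2*τ^2)
        + (r0 + 2*r1*τ + r2*τ^2)^2 := by
    funext τ
    simp only [Pi.add_apply, Pi.smul_apply, smul_eq_mul]
    rw [show (∑ i ∈ univ.erase i0, (x i + τ * v i)^2) = r0 + 2*r1*τ + r2*τ^2 from hW τ]
    ring
  rw [hfun]
  apply slice_convexOn p a r0 r1 r2
  · exact Finset.sum_nonneg fun i _ => sq_nonneg _
  · intro τ; rw [← hW τ]; exact Finset.sum_nonneg fun i _ => sq_nonneg _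
  · have := Finset.sum_mul_sq_le_sq_mul_sq (univ.erase i0) x v
    simpa [← hr0, ← hr1, ← hr2] using this

private lemma diag_eig_bounds {n : ℕ} (d : Fin n → ℝ) (hA : (Matrix.diagonal d).IsHermitian)
    (lo hi : ℝ) (hlo : ∀ i, lo ≤ d i) (hhi : ∀ i, d i ≤ hi) (j : Fin n) :
    lo ≤ hA.eigenvalues j ∧ hA.eigenvalues j ≤ hi := by
  set v : Fin n → ℝ := ⇑(hA.eigenvectorBasis j) with hv
  have hnorm : ‖hA.eigenvectorBasis j‖ = 1 := hA.eigenvectorBasis.orthonormal.1 j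
  have h1 : Real.sqrt (∑ i, ‖(hA.eigenvectorBasis j) i‖^2) = 1 := by
    rw [← EuclideanSpace.norm_eq]; exact hnorm
  rw [Real.sqrt_eq_one] at h1
  have hc : ∑ i, (v i)^2 = 1 := by
    simpa [Real.norm_eq_abs, sq_abs] using h1
  have hmv := hA.mulVec_eigenvectorBasis j
  have hdot := congrArg (fun w => v ⬝ᵥ w) hmv
  simp only [dotProduct_smul, smul_eq_mul] at hdot
  have hlhs : v ⬝ᵥ (Matrix.diagonal d *ᵥ v) = ∑ i, d i * (v i)^2 := by
    simp only [dotProduct, mulVec_diagonal]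
    exact Finset.sum_congr rfl fun i _ => by ring
  have hrhs : v ⬝ᵥ v = 1 := by
    rw [dotProduct, ← hc]
    exact Finset.sum_congr rfl fun i _ => by ring
  rw [hlhs, hrhs, mul_one] at hdot
  rw [← hdot]
  constructor
  · calc lo = lo * ∑ i, (v i)^2 := by rw [hc, mul_one]
      _ = ∑ i, lo * (v i)^2 := Finset.mul_sum _ _ _
      _ ≤ ∑ i, d i * (v i)^2 :=
        Finset.sum_le_sum fun i _ => mul_le_mul_of_nonneg_right (hlo i) (sq_nonneg _)
  · calc ∑ i, d i * (v i)^2 ≤ ∑ i, hi * (v i)^2 :=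
        Finset.sum_le_sum fun i _ => mul_le_mul_of_nonneg_right (hhi i) (sq_nonneg _)
      _ = hi * ∑ i, (v i)^2 := (Finset.mul_sum _ _ _).symm
      _ = hi := by rw [hc, mul_one]

private lemma diag_eig_exists {n : ℕ} (d : Fin n → ℝ) (hA : (Matrix.diagonal d).IsHermitian)
    (i0 : Fin n) : ∃ j, hA.eigenvalues j = d i0 := by
  set c := d i0 with hc
  set U : Matrix (Fin n) (Fin n) ℝ := (hA.eigenvectorUnitary : Matrix (Fin n) (Fin n) ℝ) with hU
  have hUU : U * star U = 1 := (Matrix.mem_unitaryGroup_iff).mp hA.eigenvectorUnitary.2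
  have hdet0 : (Matrix.diagonal d - c • 1).det = 0 := by
    rw [smul_one_eq_diagonal, Matrix.diagonal_sub, det_diagonal]
    exact Finset.prod_eq_zero (Finset.mem_univ i0) (by simp [hc])
  have hsplit : Matrix.diagonal d - c • 1
      = U * (Matrix.diagonal (RCLike.ofReal ∘ hA.eigenvalues) - c • 1) * star U := by
    rw [Matrix.mul_sub, Matrix.sub_mul]
    congr 1
    · exact hA.spectral_theorem
    · rw [Matrix.mul_smul, Matrix.mul_one, Matrix.smul_mul, hUU]
  have hdet1 : (Matrix.diagonal d - c • 1).det
      = ∏ j, (hA.eigenvalues j - c) := by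
    rw [hsplit, det_mul, det_mul]
    have hdu : U.det * (star U).det = 1 := by rw [← det_mul, hUU, det_one]
    have hdiag : (Matrix.diagonal (RCLike.ofReal ∘ hA.eigenvalues)
          - c • (1 : Matrix (Fin n) (Fin n) ℝ))
        = Matrix.diagonal (fun j => hA.eigenvalues j - c) := by
      rw [smul_one_eq_diagonal, Matrix.diagonal_sub]
      congr 1
    rw [hdiag, det_diagonal]
    linear_combination (∏ j, (hA.eigenvalues j - c)) * hdu
  rw [hdet0] at hdet1
  obtain ⟨j, _, hj⟩ := Finset.prod_eq_zero_iff.mp hdet1.symm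
  exact ⟨j, by linarith [sub_eq_zero.mp hj]⟩

private lemma diag_kappa {n : ℕ} (i0 i1 : Fin n) (hne : i1 ≠ i0) (t : ℝ) (ht : 1 ≤ t)
    (hH : (Matrix.diagonal (fun i => if i = i0 then t else 1)).IsHermitian) :
    (⨆ j, hH.eigenvalues j) / (⨅ j, hH.eigenvalues j) = t := by
  have hnem : Nonempty (Fin n) := ⟨i0⟩
  have hb := fun j => diag_eig_bounds _ hH 1 t
    (fun i => by by_cases h : i = i0 <;> simp [h, ht])
    (fun i => by by_cases h : i = i0 <;> simp [h, ht]) j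
  have hsup_le : (⨆ j, hH.eigenvalues j) ≤ t := ciSup_le fun j => (hb j).2
  obtain ⟨jt, hjt⟩ := diag_eig_exists _ hH i0
  have hjt' : hH.eigenvalues jt = t := by simpa using hjt
  have hsup_ge : t ≤ ⨆ j, hH.eigenvalues j := by
    have h := le_ciSup (Set.finite_range hH.eigenvalues).bddAbove jt
    rwa [hjt'] at h
  obtain ⟨j1, hj1⟩ := diag_eig_exists _ hH i1
  have hj1' : hH.eigenvalues j1 = 1 := by simpa [hne] using hj1
  have hinf_le : (⨅ j, hH.eigenvalues j) ≤ 1 := by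
    have h := ciInf_le (Set.finite_range hH.eigenvalues).bddBelow j1
    rwa [hj1'] at h
  have hinf_ge : 1 ≤ ⨅ j, hH.eigenvalues j := le_ciInf fun j => (hb j).1
  rw [le_antisymm hsup_le hsup_ge, le_antisymm hinf_le hinf_ge, div_one]

private lemma diag_inv {n : ℕ} (i0 : Fin n) (t : ℝ) (ht0 : 0 < t) :
    (Matrix.diagonal (fun i => if i = i0 then t else 1))⁻¹
      = Matrix.diagonal (fun i => if i = i0 then t⁻¹ else 1) := by
  apply Matrix.inv_eq_right_inv
  rw [Matrix.diagonal_mul_diagonal]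
  have h : (fun i : Fin n => (if i = i0 then t else 1) * (if i = i0 then t⁻¹ else 1))
      = fun _ : Fin n => (1:ℝ) := by
    funext i
    by_cases h : i = i0 <;> simp [h, mul_inv_cancel₀ (ne_of_gt ht0)]
  rw [h]
  exact Matrix.diagonal_one

private lemma K_eval {n : ℕ} (i0 : Fin n) (t : ℝ) (ht0 : 0 < t) (x : Fin n → ℝ) :
    (x ⬝ᵥ (Matrix.diagonal (fun i => if i = i0 then t else 1) *ᵥ x))
      * (x ⬝ᵥ ((Matrix.diagonal (fun i => if i = i0 then t else 1))⁻¹ *ᵥ x))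
    = (t * (x i0)^2 + ∑ i ∈ univ.erase i0, (x i)^2)
      * (t⁻¹ * (x i0)^2 + ∑ i ∈ univ.erase i0, (x i)^2) := by
  rw [diag_inv i0 t ht0, dot_diag, dot_diag,
    sum_split i0 _ (fun i hi => if_neg hi) x, sum_split i0 _ (fun i hi => if_neg hi) x]
  simp

private lemma sum_two {n : ℕ} (i0 i1 : Fin n) (hne : i1 ≠ i0) (e : Fin n → ℝ) (z0 z1 : ℝ) :
    ∑ i, e i * ((fun i => if i = i0 then z0 else if i = i1 then z1 else 0) i)^2
      = e i0 * z0^2 + e i1 * z1^2 := by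
  rw [← Finset.add_sum_erase _ _ (mem_univ i0)]
  have h1 : i1 ∈ univ.erase i0 := Finset.mem_erase.mpr ⟨hne, mem_univ i1⟩
  rw [← Finset.add_sum_erase _ _ h1]
  have hrest : ∑ i ∈ (univ.erase i0).erase i1,
      e i * ((fun i => if i = i0 then z0 else if i = i1 then z1 else 0) i)^2 = 0 := by
    apply Finset.sum_eq_zero
    intro i hi
    have hi1 : i ≠ i1 := Finset.ne_of_mem_erase hi
    have hi0 : i ≠ i0 := Finset.ne_of_mem_erase (Finset.mem_of_mem_erase hi)
    simp [hi0, hi1]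
  rw [hrest, add_zero]
  simp [hne]

end KantorovichAux

/-- Fix `n ≥ 2`, and suppose `γ*` is a constant such that for every `n × n`
real symmetric positive definite matrix `A`, the Kantorovich function
`K(x) = (xᵀAx)(xᵀA⁻¹x)` is convex on `ℝⁿ` if and only if `κ(A) ≤ γ*`. Then
`√(5 + 2√6) ≤ γ* ≤ 3 + 2√2`; moreover, if `n = 3`, then `2 + √3 ≤ γ*`. -/
theorem condNumber_threshold_bounds {n : ℕ} (hn : 2 ≤ n) (γ : ℝ)
    (hγ : ∀ (A : Matrix (Fin n) (Fin n) ℝ) (hA : A.PosDef),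
      ConvexOn ℝ Set.univ
          (fun x : Fin n → ℝ => (x ⬝ᵥ (A *ᵥ x)) * (x ⬝ᵥ (A⁻¹ *ᵥ x))) ↔
        (⨆ i, hA.1.eigenvalues i) / (⨅ i, hA.1.eigenvalues i) ≤ γ) :
    Real.sqrt (5 + 2 * Real.sqrt 6) ≤ γ ∧ γ ≤ 3 + 2 * Real.sqrt 2 ∧
      (n = 3 → 2 + Real.sqrt 3 ≤ γ) := by
  have h0n : 0 < n := by omega
  have h1n : 1 < n := by omega
  let i0 : Fin n := ⟨0, h0n⟩
  let i1 : Fin n := ⟨1, h1n⟩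
  have hne : i1 ≠ i0 := Fin.ne_of_val_ne (by norm_num)
  -- Part A : 2 + √3 ≤ γ
  have hs3 : Real.sqrt 3 ^ 2 = 3 := Real.sq_sqrt (by norm_num)
  have hs3nn : 0 ≤ Real.sqrt 3 := Real.sqrt_nonneg 3
  have ht0A : (0:ℝ) < 2 + Real.sqrt 3 := by linarith
  have hA : (Matrix.diagonal (fun i => if i = i0 then 2 + Real.sqrt 3 else 1)).PosDef :=
    Matrix.PosDef.diagonal (fun i => by by_cases h : i = i0 <;> simp [h] <;> linarith)
  have hκA := diag_kappa i0 i1 hne (2 + Real.sqrt 3) (by linarith) hA.1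
  have hgc := kantorovich_g_convex (n := n) i0
  have hKfun : (fun x : Fin n → ℝ =>
      (x ⬝ᵥ (Matrix.diagonal (fun i => if i = i0 then 2 + Real.sqrt 3 else 1) *ᵥ x))
        * (x ⬝ᵥ ((Matrix.diagonal (fun i => if i = i0 then 2 + Real.sqrt 3 else 1))⁻¹ *ᵥ x)))
      = fun x : Fin n → ℝ => (x i0)^4 + 4*(x i0)^2*(∑ i ∈ Finset.univ.erase i0, (x i)^2)
        + (∑ i ∈ Finset.univ.erase i0, (x i)^2)^2 := by
    funext x
    rw [K_eval i0 _ ht0A x]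
    have hinv3 : (2 + Real.sqrt 3)⁻¹ = 2 - Real.sqrt 3 := by
      have hmm : (2 + Real.sqrt 3) * (2 - Real.sqrt 3) = 1 := by nlinarith
      exact inv_eq_of_mul_eq_one_right hmm
    rw [hinv3]
    linear_combination (-(x i0 ^ 4)) * hs3
  have hlow : 2 + Real.sqrt 3 ≤ γ := by
    have hconv : ConvexOn ℝ Set.univ
        (fun x : Fin n → ℝ =>
          (x ⬝ᵥ (Matrix.diagonal (fun i => if i = i0 then 2 + Real.sqrt 3 else 1) *ᵥ x))
            * (x ⬝ᵥ ((Matrix.diagonal (fun i => if i = i0 then 2 + Real.sqrt 3 else 1))⁻¹ *ᵥ x))) := by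
      rw [hKfun]; exact hgc
    have h := (hγ _ hA).mp hconv
    rwa [hκA] at h
  have hconj1 : Real.sqrt (5 + 2 * Real.sqrt 6) ≤ γ := by
    have h6 : Real.sqrt 6 ≤ 2.5 := by
      rw [show (2.5:ℝ) = Real.sqrt (2.5^2) from (Real.sqrt_sq (by norm_num)).symm]
      exact Real.sqrt_le_sqrt (by norm_num)
    have h3 : (1:ℝ) ≤ Real.sqrt 3 := by
      rw [show (1:ℝ) = Real.sqrt 1 from (Real.sqrt_one).symm]
      exact Real.sqrt_le_sqrt (by norm_num)
    have hle : Real.sqrt (5 + 2*Real.sqrt 6) ≤ 2 + Real.sqrt 3 := by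
      rw [show (2 + Real.sqrt 3 : ℝ) = Real.sqrt ((2+Real.sqrt 3)^2) from
        (Real.sqrt_sq (by linarith)).symm]
      apply Real.sqrt_le_sqrt
      nlinarith [hs3, h6, h3]
    linarith
  -- Part B : γ ≤ 3 + 2√2
  have hs2 : Real.sqrt 2 ^ 2 = 2 := Real.sq_sqrt (by norm_num)
  have hs2nn : 0 ≤ Real.sqrt 2 := Real.sqrt_nonneg 2
  have hupper : γ ≤ 3 + 2*Real.sqrt 2 := by
    by_contra hcon
    push_neg at hcon
    obtain ⟨t, htdef⟩ : ∃ t' : ℝ, t' = min γ 6 := ⟨_, rfl⟩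
    have hs2lt : Real.sqrt 2 < 1.5 := by nlinarith
    have ht32 : 3 + 2*Real.sqrt 2 < t := htdef ▸ lt_min hcon (by linarith)
    have ht1 : (1:ℝ) ≤ t := by linarith
    have ht0 : (0:ℝ) < t := by linarith
    have htγ : t ≤ γ := htdef ▸ min_le_left _ _
    have hAt : (Matrix.diagonal (fun i => if i = i0 then t else 1)).PosDef :=
      Matrix.PosDef.diagonal (fun i => by by_cases h : i = i0 <;> simp [h] <;> linarith)
    have hκ := diag_kappa i0 i1 hne t ht1 hAt.1
    have hconv := (hγ _ hAt).mpr (by rw [hκ]; exact htγ)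
    have htt : t * t⁻¹ = 1 := mul_inv_cancel₀ (ne_of_gt ht0)
    obtain ⟨e, hedef⟩ : ∃ e' : ℝ, e' = t + t⁻¹ - 6 := ⟨_, rfl⟩
    have hq : 0 < t^2 - 6*t + 1 := by nlinarith
    have he : 0 < e := by
      have h1 : e = (t^2 - 6*t + 1) * t⁻¹ := by
        rw [hedef]; field_simp; ring
      rw [h1]
      exact mul_pos hq (inv_pos.mpr ht0)
    have h8 : (0:ℝ) < 8 + e := by linarith
    obtain ⟨s, hsdef⟩ : ∃ s' : ℝ, s' = Real.sqrt (e/(8+e)) := ⟨_, rfl⟩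
    have hs : s^2 = e/(8+e) := by rw [hsdef]; exact Real.sq_sqrt (by positivity)
    have hμ : t + t⁻¹ = 6 + e := by rw [hedef]; ring
    have hKval : ∀ z0 z1 : ℝ,
        ((fun i : Fin n => if i = i0 then z0 else if i = i1 then z1 else 0) ⬝ᵥ
          (Matrix.diagonal (fun i => if i = i0 then t else 1) *ᵥ
            (fun i => if i = i0 then z0 else if i = i1 then z1 else 0)))
        * ((fun i : Fin n => if i = i0 then z0 else if i = i1 then z1 else 0) ⬝ᵥ
          ((Matrix.diagonal (fun i => if i = i0 then t else 1))⁻¹ *ᵥ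
            (fun i => if i = i0 then z0 else if i = i1 then z1 else 0))) =
        z0^4 + (6+e)*z0^2*z1^2 + z1^4 := by
      intro z0 z1
      rw [diag_inv i0 t ht0, dot_diag, dot_diag, sum_two i0 i1 hne _ z0 z1,
        sum_two i0 i1 hne _ z0 z1]
      rw [if_pos rfl, if_pos rfl, if_neg hne, if_neg hne, ← hμ]
      linear_combination (z0^4) * htt
    have happ := hconv.2 (Set.mem_univ
        (fun i : Fin n => if i = i0 then 1+s else if i = i1 then 1-s else 0))
      (Set.mem_univ (fun i : Fin n => if i = i0 then 1-s else if i = i1 then 1+s else 0))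
      (by norm_num) (by norm_num) (by norm_num : (1/2:ℝ) + 1/2 = 1)
    have hmid : (1/2:ℝ) • (fun i : Fin n => if i = i0 then 1+s else if i = i1 then 1-s else 0)
        + (1/2:ℝ) • (fun i : Fin n => if i = i0 then 1-s else if i = i1 then 1+s else 0)
        = (fun i : Fin n => if i = i0 then (1:ℝ) else if i = i1 then 1 else 0) := by
      funext i
      simp only [Pi.add_apply, Pi.smul_apply, smul_eq_mul]
      by_cases h : i = i0
      · rw [if_pos h, if_pos h, if_pos h]; ring
      · by_cases h' : i = i1
        · rw [if_neg h, if_neg h, if_neg h, if_pos h', if_pos h', if_pos h']; ring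
        · rw [if_neg h, if_neg h, if_neg h, if_neg h', if_neg h', if_neg h']; ring
    rw [hmid] at happ
    simp only [smul_eq_mul] at happ
    rw [hKval 1 1, hKval (1+s) (1-s), hKval (1-s) (1+s)] at happ
    have key : 0 ≤ -2*e*s^2 + (8+e)*s^4 := by nlinarith [happ]
    have hs4 : s^4 = (e/(8+e))^2 := by rw [show s^4 = (s^2)^2 from by ring, hs]
    rw [hs, hs4] at key
    have hkey2 : -2*e*(e/(8+e)) + (8+e)*(e/(8+e))^2 = -(e^2/(8+e)) := by
      field_simp; ring
    rw [hkey2] at key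
    have hpos : 0 < e^2/(8+e) := by positivity
    linarith
  exact ⟨hconj1, by linarith, fun _ => hlow⟩
end
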